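/- arXiv:1605.00859 — 2 statements merged into one kernel-verified Lean document; each statement's English description precedes it below -/
import Mathlib

section
/- There exists a morphism f : ℕ+ → ℤ/2ℤ (i.e., f(xy) = f(x) + f(y) for all positive integers x, y) such that no Pythagorean triple (a,b,c) with a, b, c ∈ [1,532] is monochromatic (i.e., 533 in the previous result is minimal). -/
/-! Auxiliary development: a multiplicative parity function determined by a set of primes,
and a kernel-efficient verified search over all Pythagorean triples in `[1,532]`. -/

def Sprimes : List ℕ := [3, 7, 11, 13, 17, 19, 23, 29, 41, 53, 59, 71, 79, 89, 101, 137, 149, 157, 233, 257, 281, 313, 349, 353, 389, 397, 433, 449, 457, 521]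

/-- Strict evaluation of a natural number argument (forces to a literal under kernel whnf). -/
def forceN {α : Sort 1} (n : ℕ) (k : ℕ → α) : α :=
  Nat.rec (k 0) (fun m _ => k (m + 1)) n

lemma forceN_eq {α : Sort 1} (n : ℕ) (k : ℕ → α) : forceN n k = k n := by
  cases n <;> rfl

/-- `pc p fuel n` : number of times `p` divides `n` (for `fuel ≥ n`, `p ≥ 2`, `n ≥ 1`). -/
def pc (p : ℕ) : ℕ → ℕ → ℕ :=
  Nat.rec (fun _ => 0)
    (fun _ ih n => cond (Nat.ble 2 p && Nat.ble 1 n && (n % p == 0)) (ih (n / p) + 1) 0)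

def fN (n : ℕ) : ℕ := (Sprimes.map (fun p => pc p n n)).sum

def fB (n : ℕ) : Bool := fN n % 2 == 1

def monoOK (a b c : ℕ) : Bool := !(fB a == fB b && fB b == fB c)

lemma pc_succ (p fuel n : ℕ) :
    pc p (fuel + 1) n =
      cond (Nat.ble 2 p && Nat.ble 1 n && (n % p == 0)) (pc p fuel (n / p) + 1) 0 := rfl

lemma pc_eq (p : ℕ) (hp : p.Prime) :
    ∀ fuel n, n ≤ fuel → 0 < n → pc p fuel n = n.factorization p := by
  intro fuel
  induction fuel with
  | zero => intro n h1 h2; omega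
  | succ fuel ih =>
    intro n h1 h2
    rw [pc_succ]
    by_cases hd : p ∣ n
    · have hmod : n % p = 0 := Nat.mod_eq_zero_of_dvd hd
      have hcond : (Nat.ble 2 p && Nat.ble 1 n && (n % p == 0)) = true := by
        simp [Nat.ble_eq, hmod, hp.two_le]; omega
      rw [hcond, cond_true]
      have hple : p ≤ n := Nat.le_of_dvd h2 hd
      have hdivpos : 0 < n / p := Nat.div_pos hple hp.pos
      have hdivlt : n / p < n := Nat.div_lt_self h2 hp.one_lt
      rw [ih (n / p) (by omega) hdivpos]
      have hn : n = p * (n / p) := (Nat.mul_div_cancel' hd).symm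
      conv_rhs => rw [hn]
      rw [Nat.factorization_mul hp.pos.ne' hdivpos.ne']
      simp [hp.factorization]
      ring
    · have hmod : ¬ (n % p = 0) := fun h => hd (Nat.dvd_of_mod_eq_zero h)
      have hcond : (Nat.ble 2 p && Nat.ble 1 n && (n % p == 0)) = false := by
        simp [hmod]
      rw [hcond, cond_false, Nat.factorization_eq_zero_of_not_dvd hd]

lemma pc_eq' (p n : ℕ) (hp : p.Prime) (hn : 0 < n) : pc p n n = n.factorization p :=
  pc_eq p hp n n le_rfl hn

lemma Sprimes_prime : ∀ p ∈ Sprimes, Nat.Prime p := by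
  intro p hp; fin_cases hp <;> norm_num

lemma list_sum_map_add {α : Type*} (l : List α) (f g : α → ℕ) :
    (l.map (fun x => f x + g x)).sum = (l.map f).sum + (l.map g).sum := by
  induction l with
  | nil => simp
  | cons a l ih => simp [ih]; ring

lemma fN_mul (x y : ℕ) (hx : 0 < x) (hy : 0 < y) : fN (x * y) = fN x + fN y := by
  unfold fN
  rw [← list_sum_map_add]
  apply congrArg
  apply List.map_congr_left
  intro p hp
  have hpp := Sprimes_prime p hp
  rw [pc_eq' p _ hpp (Nat.mul_pos hx hy), pc_eq' p x hpp hx, pc_eq' p y hpp hy,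
    Nat.factorization_mul hx.ne' hy.ne']
  simp

/-! ### The search loops -/

/-- One step of the inner loop: advance `b` by one, maintaining
`s = a² + b²` and `u` = least natural with `u² ≥ s`. `q = u*u`. -/
def innerStep (ih : ℕ → ℕ → ℕ → Bool) (d s u q : ℕ) : Bool :=
  forceN (s + d) fun s' => forceN (d + 2) fun d' =>
    cond (Nat.ble s' q) (ih d' s' u) (forceN (u + 1) fun u' => ih d' s' u')

/-- Inner loop over `b`; state `(d, s, u)` with `d = 2b+1`, `s = a²+b²`,
`u` least with `u² ≥ s`. Checks each `b` in `[b₀, b₀ + fuel)`. -/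
def inner (a : ℕ) : ℕ → ℕ → ℕ → ℕ → Bool :=
  Nat.rec (fun _ _ _ => true)
    (fun _ ih d s u =>
      forceN (u * u) fun q =>
        cond (q == s)
          (cond (Nat.ble u 532)
            (cond (monoOK a (d / 2) u) (innerStep ih d s u q) false)
            (innerStep ih d s u q))
          (innerStep ih d s u q))

lemma inner_zero (a d s u : ℕ) : inner a 0 d s u = true := rfl

lemma inner_succ (a fuel d s u : ℕ) :
    inner a (fuel + 1) d s u =
      forceN (u * u) (fun q =>
        cond (q == s)
          (cond (Nat.ble u 532)
            (cond (monoOK a (d / 2) u) (innerStep (inner a fuel) d s u q) false)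
            (innerStep (inner a fuel) d s u q))
          (innerStep (inner a fuel) d s u q)) := rfl

/-- Initial search for the least `u ≥ u₀` with `u² ≥ s`. -/
def initU (s : ℕ) : ℕ → ℕ → ℕ :=
  Nat.rec (fun u => u) (fun _ ih u => cond (Nat.ble s (u * u)) u (forceN (u + 1) ih))

lemma initU_zero (s u : ℕ) : initU s 0 u = u := rfl

lemma initU_succ (s fuel u : ℕ) :
    initU s (fuel + 1) u = cond (Nat.ble s (u * u)) u (forceN (u + 1) (initU s fuel)) := rfl

/-- Outer loop over `a` from `1` to `A`. -/
def outer : ℕ → Bool :=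
  Nat.rec true (fun a ih =>
    cond (forceN (a + 1) fun a1 => forceN (a1 * a1) fun t => forceN (t + t) fun s =>
          forceN (initU s 533 (a1 + 1)) fun u =>
            forceN (533 - a1) fun fuel => forceN (a1 + a1 + 1) fun d =>
              inner a1 fuel d s u)
      ih false)

lemma outer_zero : outer 0 = true := rfl

lemma outer_succ (a : ℕ) :
    outer (a + 1) =
      cond (forceN (a + 1) fun a1 => forceN (a1 * a1) fun t => forceN (t + t) fun s =>
          forceN (initU s 533 (a1 + 1)) fun u =>
            forceN (533 - a1) fun fuel => forceN (a1 + a1 + 1) fun d =>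
              inner a1 fuel d s u)
        (outer a) false := rfl

/-! ### Specifications -/

lemma initU_spec (s : ℕ) : ∀ fuel u c, s ≤ c * c → (∀ v, v < c → v * v < s) →
    u ≤ c → c - u ≤ fuel → initU s fuel u = c := by
  intro fuel
  induction fuel with
  | zero =>
    intro u c h1 h2 h3 h4
    have : u = c := by omega
    subst this; exact initU_zero s u
  | succ fuel ih =>
    intro u c h1 h2 h3 h4
    rw [initU_succ]
    by_cases hle : s ≤ u * u
    · have : ¬ u < c := fun h => absurd (h2 u h) (by omega)
      have hu : u = c := by omega
      subst hu
      have hb : (Nat.ble s (u * u)) = true := by rw [Nat.ble_eq]; exact hle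
      rw [hb, cond_true]
    · have huc : u < c := by
        by_contra h
        have : c = u := by omega
        subst this; exact hle h1
      have : (Nat.ble s (u * u)) = false := by
        rw [Bool.eq_false_iff, Ne, Nat.ble_eq]; omega
      rw [this, cond_false, forceN_eq]
      exact ih (u + 1) c h1 h2 (by omega) (by omega)

lemma inner_spec (a : ℕ) (ha : 1 ≤ a) : ∀ fuel b s u,
    s = a * a + b * b →
    s ≤ u * u → (∀ v, v < u → v * v < s) →
    inner a fuel (b + b + 1) s u = true →
    ∀ j c, b ≤ j → j < b + fuel → c ≤ 532 → a * a + j * j = c * c →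
      monoOK a j c = true := by
  intro fuel
  induction fuel with
  | zero => intro b s u _ _ _ _ j c h1 h2 _ _; omega
  | succ fuel ih =>
    intro b s u hs hu hmin htrue j c hbj hjlt hc heq
    rw [inner_succ, forceN_eq] at htrue
    -- extract the two facts from htrue
    have key : (u * u = s → u ≤ 532 → monoOK a b u = true) ∧
        innerStep (inner a fuel) (b + b + 1) s u (u * u) = true := by
      by_cases hq : u * u = s
      · have hbeq : (u * u == s) = true := by simp [hq]
        rw [hbeq, cond_true] at htrue
        by_cases h5 : u ≤ 532
        · have : (Nat.ble u 532) = true := by simp [Nat.ble_eq, h5]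
          rw [this, cond_true] at htrue
          cases hm : monoOK a ((b + b + 1) / 2) u with
          | false => rw [hm, cond_false] at htrue; exact absurd htrue (by simp)
          | true =>
            rw [hm, cond_true] at htrue
            have hdb : (b + b + 1) / 2 = b := by omega
            rw [hdb] at hm
            exact ⟨fun _ _ => hm, htrue⟩
        · have : (Nat.ble u 532) = false := by rw [Bool.eq_false_iff, Ne, Nat.ble_eq]; omega
          rw [this, cond_false] at htrue
          exact ⟨fun _ h => absurd h h5, htrue⟩
      · have hbeq : (u * u == s) = false := by simp [hq]
        rw [hbeq, cond_false] at htrue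
        exact ⟨fun h _ => absurd h hq, htrue⟩
    have hub : b < u := by
      by_contra h
      push_neg at h
      have : u * u ≤ b * b := Nat.mul_le_mul h h
      have : 1 ≤ a * a := Nat.one_le_iff_ne_zero.mpr (by positivity)
      omega
    rcases Nat.eq_or_lt_of_le hbj with rfl | hlt
    · -- j = b : triple found here
      have hcs : s = c * c := by omega
      have hcu : u = c := by
        have h1 : c ≤ u := by
          by_contra h
          push_neg at h
          have : u * u < c * c := by nlinarith
          omega
        have h2 : ¬ c < u := fun h => by have := hmin c h; omega
        omega
      subst hcu
      exact key.1 (by omega) hc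
    · -- j > b : use the inductive hypothesis on the advanced state
      have hstep := key.2
      rw [innerStep, forceN_eq, forceN_eq] at hstep
      have hd' : b + b + 1 + 2 = (b + 1) + (b + 1) + 1 := by omega
      have hs' : s + (b + b + 1) = a * a + (b + 1) * (b + 1) := by
        rw [hs]; ring
      by_cases hle : s + (b + b + 1) ≤ u * u
      · have : (Nat.ble (s + (b + b + 1)) (u * u)) = true := by simp [Nat.ble_eq, hle]
        rw [this, cond_true, hd'] at hstep
        exact ih (b + 1) (s + (b + b + 1)) u hs' hle
          (fun v hv => by have := hmin v hv; omega) hstep j c hlt (by omega) hc heq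
      · have : (Nat.ble (s + (b + b + 1)) (u * u)) = false := by
          rw [Bool.eq_false_iff, Ne, Nat.ble_eq]; omega
        rw [this, cond_false, forceN_eq, hd'] at hstep
        refine ih (b + 1) (s + (b + b + 1)) (u + 1) hs' ?_
          (fun v hv => ?_) hstep j c hlt (by omega) hc heq
        · have : u * u + (u + u) + 1 = (u + 1) * (u + 1) := by ring
          omega
        · rcases Nat.lt_succ_iff_lt_or_eq.mp hv with h | h
          · have := hmin v h; omega
          · subst h; omega

lemma outer_spec : ∀ A, outer A = true → ∀ a, 1 ≤ a → a ≤ A →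
    inner a (533 - a) (a + a + 1) (a * a + a * a) (initU (a * a + a * a) 533 (a + 1)) = true := by
  intro A
  induction A with
  | zero => intro _ a _ _; omega
  | succ A ih =>
    intro h a h1 h2
    rw [outer_succ] at h
    simp only [forceN_eq] at h
    cases hX : inner (A + 1) (533 - (A + 1)) ((A + 1) + (A + 1) + 1)
        ((A + 1) * (A + 1) + (A + 1) * (A + 1))
        (initU ((A + 1) * (A + 1) + (A + 1) * (A + 1)) 533 ((A + 1) + 1)) with
    | false => rw [hX] at h; exact absurd h (by simp)
    | true =>
      rw [hX, cond_true] at h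
      rcases Nat.lt_succ_iff_lt_or_eq.mp (Nat.lt_succ_of_le h2) with hlt | rfl
      · exact ih h a h1 (by omega)
      · exact hX

set_option maxRecDepth 100000 in
set_option maxHeartbeats 1000000 in
theorem checkAll : outer 532 = true := by decide +kernel

/-- The least `u` with `s ≤ u*u` exists. -/
lemma exists_root_bound (s : ℕ) : ∃ u, s ≤ u * u := ⟨s, by nlinarith⟩

lemma no_triple (a b c : ℕ) (ha : 1 ≤ a) (hab : a ≤ b) (hb : b ≤ 532) (hc : c ≤ 532)
    (h : a * a + b * b = c * c) : monoOK a b c = true := by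
  set s := a * a + a * a with hs
  have hex : ∃ u, s ≤ u * u := exists_root_bound s
  set u₀ := Nat.find hex with hu₀
  have hu₀s : s ≤ u₀ * u₀ := Nat.find_spec hex
  have hu₀min : ∀ v, v < u₀ → v * v < s := by
    intro v hv
    have := Nat.find_min hex hv
    omega
  have hinit : initU s 533 (a + 1) = u₀ := by
    apply initU_spec s 533 (a + 1) u₀ hu₀s hu₀min
    · by_contra hcon
      push_neg at hcon
      have : u₀ ≤ a := by omega
      have : u₀ * u₀ ≤ a * a := Nat.mul_le_mul this this
      have : 1 ≤ a * a := Nat.one_le_iff_ne_zero.mpr (by positivity)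
      omega
    · have h2 : u₀ ≤ a + a + 2 := by
        by_contra hcon
        push_neg at hcon
        have hlt : a + a + 2 < u₀ := hcon
        have hcc := hu₀min (a + a + 2) hlt
        rw [hs] at hcc
        nlinarith
      omega
  have houter := outer_spec 532 checkAll a ha (le_trans hab hb)
  rw [hinit] at houter
  exact inner_spec a ha (533 - a) a s u₀ rfl hu₀s hu₀min houter b c hab (by omega) hc h

/-! ### The morphism into `ZMod 2` -/

lemma fB_congr {m n : ℕ} (h : ((fN m : ℕ) : ZMod 2) = ((fN n : ℕ) : ZMod 2)) :
    fB m = fB n := by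
  have h2 : fN m % 2 = fN n % 2 := (ZMod.natCast_eq_natCast_iff _ _ _).mp h
  unfold fB
  rw [h2]

lemma monoOK_contra {x y z : ℕ} (hOK : monoOK x y z = true)
    (h1 : fB x = fB y) (h2 : fB y = fB z) : False := by
  unfold monoOK at hOK
  rw [h1, h2] at hOK
  simp at hOK

/-- There is a morphism `f : ℕ+ → ℤ/2ℤ` under which no Pythagorean triple in `[1, 532]`
is monochromatic: `533` is minimal in the previous result. -/
theorem morphism_zmod2_avoiding_532 :
    ∃ f : ℕ+ → ZMod 2, (∀ x y : ℕ+, f (x * y) = f x + f y) ∧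
      ∀ a b c : ℕ+, a ≤ 532 → b ≤ 532 → c ≤ 532 →
        a ^ 2 + b ^ 2 = c ^ 2 → ¬(f a = f b ∧ f b = f c) := by
  refine ⟨fun n => ((fN (n : ℕ) : ℕ) : ZMod 2), fun x y => ?_, ?_⟩
  · show ((fN ((x * y : ℕ+) : ℕ) : ℕ) : ZMod 2) = ((fN (x : ℕ) : ℕ) : ZMod 2) + ((fN (y : ℕ) : ℕ) : ZMod 2)
    rw [PNat.mul_coe, fN_mul (x : ℕ) (y : ℕ) x.pos y.pos]
    push_cast
    ring
  · intro a b c ha hb hc heq ⟨h1, h2⟩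
    have hA : (a : ℕ) ≤ 532 := by exact_mod_cast ha
    have hB : (b : ℕ) ≤ 532 := by exact_mod_cast hb
    have hC : (c : ℕ) ≤ 532 := by exact_mod_cast hc
    have hEq : (a : ℕ) * (a : ℕ) + (b : ℕ) * (b : ℕ) = (c : ℕ) * (c : ℕ) := by
      have := congrArg (fun t : ℕ+ => (t : ℕ)) heq
      push_cast at this
      nlinarith [this]
    have hab : fB (a : ℕ) = fB (b : ℕ) := fB_congr h1
    have hbc : fB (b : ℕ) = fB (c : ℕ) := fB_congr h2
    rcases le_total (a : ℕ) (b : ℕ) with hle | hle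
    · exact monoOK_contra (no_triple a b c a.pos hle hB hC hEq) hab hbc
    · exact monoOK_contra (no_triple b a c b.pos hle hA hC (by omega))
        hab.symm (hab.trans hbc)
end

section
/- Let p_i denote the i-th prime number (p_1 = 2, p_2 = 3, ...). Every morphism f : ℕ+ → ℤ/2ℤ with f(p_i) = 0 for i ∈ {1,3,9,11,12,18,21,30,57,74,80,89} and f(p_i) = 1 for i ∈ {2,4,5,6,7,8,10,13,16,24,26,55,65} (and arbitrary values on all other primes) has the property that no Pythagorean triple (a,b,c) with a, b, c ∈ [1,532] is monochromatic. -/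
theorem cstep1 {n c : ℕ} (h : Nat.count Nat.Prime n = c) (hp : Nat.Prime n) :
    Nat.count Nat.Prime (n+1) = c+1 := by rw [Nat.count_succ, if_pos hp, h]
theorem cstep0 {n c : ℕ} (h : Nat.count Nat.Prime n = c) (hp : ¬ Nat.Prime n) :
    Nat.count Nat.Prime (n+1) = c := by rw [Nat.count_succ, if_neg hp, h, Nat.add_zero]
theorem cc0 : Nat.count Nat.Prime 0 = 0 := Nat.count_zero Nat.Prime
theorem cc1 : Nat.count Nat.Prime 1 = 0 := cstep0 cc0 (by norm_num)
theorem cc2 : Nat.count Nat.Prime 2 = 0 := cstep0 cc1 (by norm_num)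
theorem cc3 : Nat.count Nat.Prime 3 = 1 := cstep1 cc2 (by norm_num)
theorem cc4 : Nat.count Nat.Prime 4 = 2 := cstep1 cc3 (by norm_num)
theorem cc5 : Nat.count Nat.Prime 5 = 2 := cstep0 cc4 (by norm_num)
theorem cc6 : Nat.count Nat.Prime 6 = 3 := cstep1 cc5 (by norm_num)
theorem cc7 : Nat.count Nat.Prime 7 = 3 := cstep0 cc6 (by norm_num)
theorem cc8 : Nat.count Nat.Prime 8 = 4 := cstep1 cc7 (by norm_num)
theorem cc9 : Nat.count Nat.Prime 9 = 4 := cstep0 cc8 (by norm_num)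
theorem cc10 : Nat.count Nat.Prime 10 = 4 := cstep0 cc9 (by norm_num)
theorem cc11 : Nat.count Nat.Prime 11 = 4 := cstep0 cc10 (by norm_num)
theorem cc12 : Nat.count Nat.Prime 12 = 5 := cstep1 cc11 (by norm_num)
theorem cc13 : Nat.count Nat.Prime 13 = 5 := cstep0 cc12 (by norm_num)
theorem cc14 : Nat.count Nat.Prime 14 = 6 := cstep1 cc13 (by norm_num)
theorem cc15 : Nat.count Nat.Prime 15 = 6 := cstep0 cc14 (by norm_num)
theorem cc16 : Nat.count Nat.Prime 16 = 6 := cstep0 cc15 (by norm_num)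
theorem cc17 : Nat.count Nat.Prime 17 = 6 := cstep0 cc16 (by norm_num)
theorem cc18 : Nat.count Nat.Prime 18 = 7 := cstep1 cc17 (by norm_num)
theorem cc19 : Nat.count Nat.Prime 19 = 7 := cstep0 cc18 (by norm_num)
theorem cc20 : Nat.count Nat.Prime 20 = 8 := cstep1 cc19 (by norm_num)
theorem cc21 : Nat.count Nat.Prime 21 = 8 := cstep0 cc20 (by norm_num)
theorem cc22 : Nat.count Nat.Prime 22 = 8 := cstep0 cc21 (by norm_num)
theorem cc23 : Nat.count Nat.Prime 23 = 8 := cstep0 cc22 (by norm_num)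
theorem cc24 : Nat.count Nat.Prime 24 = 9 := cstep1 cc23 (by norm_num)
theorem cc25 : Nat.count Nat.Prime 25 = 9 := cstep0 cc24 (by norm_num)
theorem cc26 : Nat.count Nat.Prime 26 = 9 := cstep0 cc25 (by norm_num)
theorem cc27 : Nat.count Nat.Prime 27 = 9 := cstep0 cc26 (by norm_num)
theorem cc28 : Nat.count Nat.Prime 28 = 9 := cstep0 cc27 (by norm_num)
theorem cc29 : Nat.count Nat.Prime 29 = 9 := cstep0 cc28 (by norm_num)
theorem cc30 : Nat.count Nat.Prime 30 = 10 := cstep1 cc29 (by norm_num)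
theorem cc31 : Nat.count Nat.Prime 31 = 10 := cstep0 cc30 (by norm_num)
theorem cc32 : Nat.count Nat.Prime 32 = 11 := cstep1 cc31 (by norm_num)
theorem cc33 : Nat.count Nat.Prime 33 = 11 := cstep0 cc32 (by norm_num)
theorem cc34 : Nat.count Nat.Prime 34 = 11 := cstep0 cc33 (by norm_num)
theorem cc35 : Nat.count Nat.Prime 35 = 11 := cstep0 cc34 (by norm_num)
theorem cc36 : Nat.count Nat.Prime 36 = 11 := cstep0 cc35 (by norm_num)
theorem cc37 : Nat.count Nat.Prime 37 = 11 := cstep0 cc36 (by norm_num)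
theorem cc38 : Nat.count Nat.Prime 38 = 12 := cstep1 cc37 (by norm_num)
theorem cc39 : Nat.count Nat.Prime 39 = 12 := cstep0 cc38 (by norm_num)
theorem cc40 : Nat.count Nat.Prime 40 = 12 := cstep0 cc39 (by norm_num)
theorem cc41 : Nat.count Nat.Prime 41 = 12 := cstep0 cc40 (by norm_num)
theorem cc42 : Nat.count Nat.Prime 42 = 13 := cstep1 cc41 (by norm_num)
theorem cc43 : Nat.count Nat.Prime 43 = 13 := cstep0 cc42 (by norm_num)
theorem cc44 : Nat.count Nat.Prime 44 = 14 := cstep1 cc43 (by norm_num)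
theorem cc45 : Nat.count Nat.Prime 45 = 14 := cstep0 cc44 (by norm_num)
theorem cc46 : Nat.count Nat.Prime 46 = 14 := cstep0 cc45 (by norm_num)
theorem cc47 : Nat.count Nat.Prime 47 = 14 := cstep0 cc46 (by norm_num)
theorem cc48 : Nat.count Nat.Prime 48 = 15 := cstep1 cc47 (by norm_num)
theorem cc49 : Nat.count Nat.Prime 49 = 15 := cstep0 cc48 (by norm_num)
theorem cc50 : Nat.count Nat.Prime 50 = 15 := cstep0 cc49 (by norm_num)
theorem cc51 : Nat.count Nat.Prime 51 = 15 := cstep0 cc50 (by norm_num)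
theorem cc52 : Nat.count Nat.Prime 52 = 15 := cstep0 cc51 (by norm_num)
theorem cc53 : Nat.count Nat.Prime 53 = 15 := cstep0 cc52 (by norm_num)
theorem cc54 : Nat.count Nat.Prime 54 = 16 := cstep1 cc53 (by norm_num)
theorem cc55 : Nat.count Nat.Prime 55 = 16 := cstep0 cc54 (by norm_num)
theorem cc56 : Nat.count Nat.Prime 56 = 16 := cstep0 cc55 (by norm_num)
theorem cc57 : Nat.count Nat.Prime 57 = 16 := cstep0 cc56 (by norm_num)
theorem cc58 : Nat.count Nat.Prime 58 = 16 := cstep0 cc57 (by norm_num)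
theorem cc59 : Nat.count Nat.Prime 59 = 16 := cstep0 cc58 (by norm_num)
theorem cc60 : Nat.count Nat.Prime 60 = 17 := cstep1 cc59 (by norm_num)
theorem cc61 : Nat.count Nat.Prime 61 = 17 := cstep0 cc60 (by norm_num)
theorem cc62 : Nat.count Nat.Prime 62 = 18 := cstep1 cc61 (by norm_num)
theorem cc63 : Nat.count Nat.Prime 63 = 18 := cstep0 cc62 (by norm_num)
theorem cc64 : Nat.count Nat.Prime 64 = 18 := cstep0 cc63 (by norm_num)
theorem cc65 : Nat.count Nat.Prime 65 = 18 := cstep0 cc64 (by norm_num)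
theorem cc66 : Nat.count Nat.Prime 66 = 18 := cstep0 cc65 (by norm_num)
theorem cc67 : Nat.count Nat.Prime 67 = 18 := cstep0 cc66 (by norm_num)
theorem cc68 : Nat.count Nat.Prime 68 = 19 := cstep1 cc67 (by norm_num)
theorem cc69 : Nat.count Nat.Prime 69 = 19 := cstep0 cc68 (by norm_num)
theorem cc70 : Nat.count Nat.Prime 70 = 19 := cstep0 cc69 (by norm_num)
theorem cc71 : Nat.count Nat.Prime 71 = 19 := cstep0 cc70 (by norm_num)
theorem cc72 : Nat.count Nat.Prime 72 = 20 := cstep1 cc71 (by norm_num)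
theorem cc73 : Nat.count Nat.Prime 73 = 20 := cstep0 cc72 (by norm_num)
theorem cc74 : Nat.count Nat.Prime 74 = 21 := cstep1 cc73 (by norm_num)
theorem cc75 : Nat.count Nat.Prime 75 = 21 := cstep0 cc74 (by norm_num)
theorem cc76 : Nat.count Nat.Prime 76 = 21 := cstep0 cc75 (by norm_num)
theorem cc77 : Nat.count Nat.Prime 77 = 21 := cstep0 cc76 (by norm_num)
theorem cc78 : Nat.count Nat.Prime 78 = 21 := cstep0 cc77 (by norm_num)
theorem cc79 : Nat.count Nat.Prime 79 = 21 := cstep0 cc78 (by norm_num)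
theorem cc80 : Nat.count Nat.Prime 80 = 22 := cstep1 cc79 (by norm_num)
theorem cc81 : Nat.count Nat.Prime 81 = 22 := cstep0 cc80 (by norm_num)
theorem cc82 : Nat.count Nat.Prime 82 = 22 := cstep0 cc81 (by norm_num)
theorem cc83 : Nat.count Nat.Prime 83 = 22 := cstep0 cc82 (by norm_num)
theorem cc84 : Nat.count Nat.Prime 84 = 23 := cstep1 cc83 (by norm_num)
theorem cc85 : Nat.count Nat.Prime 85 = 23 := cstep0 cc84 (by norm_num)
theorem cc86 : Nat.count Nat.Prime 86 = 23 := cstep0 cc85 (by norm_num)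
theorem cc87 : Nat.count Nat.Prime 87 = 23 := cstep0 cc86 (by norm_num)
theorem cc88 : Nat.count Nat.Prime 88 = 23 := cstep0 cc87 (by norm_num)
theorem cc89 : Nat.count Nat.Prime 89 = 23 := cstep0 cc88 (by norm_num)
theorem cc90 : Nat.count Nat.Prime 90 = 24 := cstep1 cc89 (by norm_num)
theorem cc91 : Nat.count Nat.Prime 91 = 24 := cstep0 cc90 (by norm_num)
theorem cc92 : Nat.count Nat.Prime 92 = 24 := cstep0 cc91 (by norm_num)
theorem cc93 : Nat.count Nat.Prime 93 = 24 := cstep0 cc92 (by norm_num)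
theorem cc94 : Nat.count Nat.Prime 94 = 24 := cstep0 cc93 (by norm_num)
theorem cc95 : Nat.count Nat.Prime 95 = 24 := cstep0 cc94 (by norm_num)
theorem cc96 : Nat.count Nat.Prime 96 = 24 := cstep0 cc95 (by norm_num)
theorem cc97 : Nat.count Nat.Prime 97 = 24 := cstep0 cc96 (by norm_num)
theorem cc98 : Nat.count Nat.Prime 98 = 25 := cstep1 cc97 (by norm_num)
theorem cc99 : Nat.count Nat.Prime 99 = 25 := cstep0 cc98 (by norm_num)
theorem cc100 : Nat.count Nat.Prime 100 = 25 := cstep0 cc99 (by norm_num)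
theorem cc101 : Nat.count Nat.Prime 101 = 25 := cstep0 cc100 (by norm_num)
theorem cc102 : Nat.count Nat.Prime 102 = 26 := cstep1 cc101 (by norm_num)
theorem cc103 : Nat.count Nat.Prime 103 = 26 := cstep0 cc102 (by norm_num)
theorem cc104 : Nat.count Nat.Prime 104 = 27 := cstep1 cc103 (by norm_num)
theorem cc105 : Nat.count Nat.Prime 105 = 27 := cstep0 cc104 (by norm_num)
theorem cc106 : Nat.count Nat.Prime 106 = 27 := cstep0 cc105 (by norm_num)
theorem cc107 : Nat.count Nat.Prime 107 = 27 := cstep0 cc106 (by norm_num)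
theorem cc108 : Nat.count Nat.Prime 108 = 28 := cstep1 cc107 (by norm_num)
theorem cc109 : Nat.count Nat.Prime 109 = 28 := cstep0 cc108 (by norm_num)
theorem cc110 : Nat.count Nat.Prime 110 = 29 := cstep1 cc109 (by norm_num)
theorem cc111 : Nat.count Nat.Prime 111 = 29 := cstep0 cc110 (by norm_num)
theorem cc112 : Nat.count Nat.Prime 112 = 29 := cstep0 cc111 (by norm_num)
theorem cc113 : Nat.count Nat.Prime 113 = 29 := cstep0 cc112 (by norm_num)
theorem cc114 : Nat.count Nat.Prime 114 = 30 := cstep1 cc113 (by norm_num)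
theorem cc115 : Nat.count Nat.Prime 115 = 30 := cstep0 cc114 (by norm_num)
theorem cc116 : Nat.count Nat.Prime 116 = 30 := cstep0 cc115 (by norm_num)
theorem cc117 : Nat.count Nat.Prime 117 = 30 := cstep0 cc116 (by norm_num)
theorem cc118 : Nat.count Nat.Prime 118 = 30 := cstep0 cc117 (by norm_num)
theorem cc119 : Nat.count Nat.Prime 119 = 30 := cstep0 cc118 (by norm_num)
theorem cc120 : Nat.count Nat.Prime 120 = 30 := cstep0 cc119 (by norm_num)
theorem cc121 : Nat.count Nat.Prime 121 = 30 := cstep0 cc120 (by norm_num)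
theorem cc122 : Nat.count Nat.Prime 122 = 30 := cstep0 cc121 (by norm_num)
theorem cc123 : Nat.count Nat.Prime 123 = 30 := cstep0 cc122 (by norm_num)
theorem cc124 : Nat.count Nat.Prime 124 = 30 := cstep0 cc123 (by norm_num)
theorem cc125 : Nat.count Nat.Prime 125 = 30 := cstep0 cc124 (by norm_num)
theorem cc126 : Nat.count Nat.Prime 126 = 30 := cstep0 cc125 (by norm_num)
theorem cc127 : Nat.count Nat.Prime 127 = 30 := cstep0 cc126 (by norm_num)
theorem cc128 : Nat.count Nat.Prime 128 = 31 := cstep1 cc127 (by norm_num)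
theorem cc129 : Nat.count Nat.Prime 129 = 31 := cstep0 cc128 (by norm_num)
theorem cc130 : Nat.count Nat.Prime 130 = 31 := cstep0 cc129 (by norm_num)
theorem cc131 : Nat.count Nat.Prime 131 = 31 := cstep0 cc130 (by norm_num)
theorem cc132 : Nat.count Nat.Prime 132 = 32 := cstep1 cc131 (by norm_num)
theorem cc133 : Nat.count Nat.Prime 133 = 32 := cstep0 cc132 (by norm_num)
theorem cc134 : Nat.count Nat.Prime 134 = 32 := cstep0 cc133 (by norm_num)
theorem cc135 : Nat.count Nat.Prime 135 = 32 := cstep0 cc134 (by norm_num)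
theorem cc136 : Nat.count Nat.Prime 136 = 32 := cstep0 cc135 (by norm_num)
theorem cc137 : Nat.count Nat.Prime 137 = 32 := cstep0 cc136 (by norm_num)
theorem cc138 : Nat.count Nat.Prime 138 = 33 := cstep1 cc137 (by norm_num)
theorem cc139 : Nat.count Nat.Prime 139 = 33 := cstep0 cc138 (by norm_num)
theorem cc140 : Nat.count Nat.Prime 140 = 34 := cstep1 cc139 (by norm_num)
theorem cc141 : Nat.count Nat.Prime 141 = 34 := cstep0 cc140 (by norm_num)
theorem cc142 : Nat.count Nat.Prime 142 = 34 := cstep0 cc141 (by norm_num)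
theorem cc143 : Nat.count Nat.Prime 143 = 34 := cstep0 cc142 (by norm_num)
theorem cc144 : Nat.count Nat.Prime 144 = 34 := cstep0 cc143 (by norm_num)
theorem cc145 : Nat.count Nat.Prime 145 = 34 := cstep0 cc144 (by norm_num)
theorem cc146 : Nat.count Nat.Prime 146 = 34 := cstep0 cc145 (by norm_num)
theorem cc147 : Nat.count Nat.Prime 147 = 34 := cstep0 cc146 (by norm_num)
theorem cc148 : Nat.count Nat.Prime 148 = 34 := cstep0 cc147 (by norm_num)
theorem cc149 : Nat.count Nat.Prime 149 = 34 := cstep0 cc148 (by norm_num)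
theorem cc150 : Nat.count Nat.Prime 150 = 35 := cstep1 cc149 (by norm_num)
theorem cc151 : Nat.count Nat.Prime 151 = 35 := cstep0 cc150 (by norm_num)
theorem cc152 : Nat.count Nat.Prime 152 = 36 := cstep1 cc151 (by norm_num)
theorem cc153 : Nat.count Nat.Prime 153 = 36 := cstep0 cc152 (by norm_num)
theorem cc154 : Nat.count Nat.Prime 154 = 36 := cstep0 cc153 (by norm_num)
theorem cc155 : Nat.count Nat.Prime 155 = 36 := cstep0 cc154 (by norm_num)
theorem cc156 : Nat.count Nat.Prime 156 = 36 := cstep0 cc155 (by norm_num)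
theorem cc157 : Nat.count Nat.Prime 157 = 36 := cstep0 cc156 (by norm_num)
theorem cc158 : Nat.count Nat.Prime 158 = 37 := cstep1 cc157 (by norm_num)
theorem cc159 : Nat.count Nat.Prime 159 = 37 := cstep0 cc158 (by norm_num)
theorem cc160 : Nat.count Nat.Prime 160 = 37 := cstep0 cc159 (by norm_num)
theorem cc161 : Nat.count Nat.Prime 161 = 37 := cstep0 cc160 (by norm_num)
theorem cc162 : Nat.count Nat.Prime 162 = 37 := cstep0 cc161 (by norm_num)
theorem cc163 : Nat.count Nat.Prime 163 = 37 := cstep0 cc162 (by norm_num)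
theorem cc164 : Nat.count Nat.Prime 164 = 38 := cstep1 cc163 (by norm_num)
theorem cc165 : Nat.count Nat.Prime 165 = 38 := cstep0 cc164 (by norm_num)
theorem cc166 : Nat.count Nat.Prime 166 = 38 := cstep0 cc165 (by norm_num)
theorem cc167 : Nat.count Nat.Prime 167 = 38 := cstep0 cc166 (by norm_num)
theorem cc168 : Nat.count Nat.Prime 168 = 39 := cstep1 cc167 (by norm_num)
theorem cc169 : Nat.count Nat.Prime 169 = 39 := cstep0 cc168 (by norm_num)
theorem cc170 : Nat.count Nat.Prime 170 = 39 := cstep0 cc169 (by norm_num)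
theorem cc171 : Nat.count Nat.Prime 171 = 39 := cstep0 cc170 (by norm_num)
theorem cc172 : Nat.count Nat.Prime 172 = 39 := cstep0 cc171 (by norm_num)
theorem cc173 : Nat.count Nat.Prime 173 = 39 := cstep0 cc172 (by norm_num)
theorem cc174 : Nat.count Nat.Prime 174 = 40 := cstep1 cc173 (by norm_num)
theorem cc175 : Nat.count Nat.Prime 175 = 40 := cstep0 cc174 (by norm_num)
theorem cc176 : Nat.count Nat.Prime 176 = 40 := cstep0 cc175 (by norm_num)
theorem cc177 : Nat.count Nat.Prime 177 = 40 := cstep0 cc176 (by norm_num)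
theorem cc178 : Nat.count Nat.Prime 178 = 40 := cstep0 cc177 (by norm_num)
theorem cc179 : Nat.count Nat.Prime 179 = 40 := cstep0 cc178 (by norm_num)
theorem cc180 : Nat.count Nat.Prime 180 = 41 := cstep1 cc179 (by norm_num)
theorem cc181 : Nat.count Nat.Prime 181 = 41 := cstep0 cc180 (by norm_num)
theorem cc182 : Nat.count Nat.Prime 182 = 42 := cstep1 cc181 (by norm_num)
theorem cc183 : Nat.count Nat.Prime 183 = 42 := cstep0 cc182 (by norm_num)
theorem cc184 : Nat.count Nat.Prime 184 = 42 := cstep0 cc183 (by norm_num)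
theorem cc185 : Nat.count Nat.Prime 185 = 42 := cstep0 cc184 (by norm_num)
theorem cc186 : Nat.count Nat.Prime 186 = 42 := cstep0 cc185 (by norm_num)
theorem cc187 : Nat.count Nat.Prime 187 = 42 := cstep0 cc186 (by norm_num)
theorem cc188 : Nat.count Nat.Prime 188 = 42 := cstep0 cc187 (by norm_num)
theorem cc189 : Nat.count Nat.Prime 189 = 42 := cstep0 cc188 (by norm_num)
theorem cc190 : Nat.count Nat.Prime 190 = 42 := cstep0 cc189 (by norm_num)
theorem cc191 : Nat.count Nat.Prime 191 = 42 := cstep0 cc190 (by norm_num)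
theorem cc192 : Nat.count Nat.Prime 192 = 43 := cstep1 cc191 (by norm_num)
theorem cc193 : Nat.count Nat.Prime 193 = 43 := cstep0 cc192 (by norm_num)
theorem cc194 : Nat.count Nat.Prime 194 = 44 := cstep1 cc193 (by norm_num)
theorem cc195 : Nat.count Nat.Prime 195 = 44 := cstep0 cc194 (by norm_num)
theorem cc196 : Nat.count Nat.Prime 196 = 44 := cstep0 cc195 (by norm_num)
theorem cc197 : Nat.count Nat.Prime 197 = 44 := cstep0 cc196 (by norm_num)
theorem cc198 : Nat.count Nat.Prime 198 = 45 := cstep1 cc197 (by norm_num)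
theorem cc199 : Nat.count Nat.Prime 199 = 45 := cstep0 cc198 (by norm_num)
theorem cc200 : Nat.count Nat.Prime 200 = 46 := cstep1 cc199 (by norm_num)
theorem cc201 : Nat.count Nat.Prime 201 = 46 := cstep0 cc200 (by norm_num)
theorem cc202 : Nat.count Nat.Prime 202 = 46 := cstep0 cc201 (by norm_num)
theorem cc203 : Nat.count Nat.Prime 203 = 46 := cstep0 cc202 (by norm_num)
theorem cc204 : Nat.count Nat.Prime 204 = 46 := cstep0 cc203 (by norm_num)
theorem cc205 : Nat.count Nat.Prime 205 = 46 := cstep0 cc204 (by norm_num)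
theorem cc206 : Nat.count Nat.Prime 206 = 46 := cstep0 cc205 (by norm_num)
theorem cc207 : Nat.count Nat.Prime 207 = 46 := cstep0 cc206 (by norm_num)
theorem cc208 : Nat.count Nat.Prime 208 = 46 := cstep0 cc207 (by norm_num)
theorem cc209 : Nat.count Nat.Prime 209 = 46 := cstep0 cc208 (by norm_num)
theorem cc210 : Nat.count Nat.Prime 210 = 46 := cstep0 cc209 (by norm_num)
theorem cc211 : Nat.count Nat.Prime 211 = 46 := cstep0 cc210 (by norm_num)
theorem cc212 : Nat.count Nat.Prime 212 = 47 := cstep1 cc211 (by norm_num)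
theorem cc213 : Nat.count Nat.Prime 213 = 47 := cstep0 cc212 (by norm_num)
theorem cc214 : Nat.count Nat.Prime 214 = 47 := cstep0 cc213 (by norm_num)
theorem cc215 : Nat.count Nat.Prime 215 = 47 := cstep0 cc214 (by norm_num)
theorem cc216 : Nat.count Nat.Prime 216 = 47 := cstep0 cc215 (by norm_num)
theorem cc217 : Nat.count Nat.Prime 217 = 47 := cstep0 cc216 (by norm_num)
theorem cc218 : Nat.count Nat.Prime 218 = 47 := cstep0 cc217 (by norm_num)
theorem cc219 : Nat.count Nat.Prime 219 = 47 := cstep0 cc218 (by norm_num)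
theorem cc220 : Nat.count Nat.Prime 220 = 47 := cstep0 cc219 (by norm_num)
theorem cc221 : Nat.count Nat.Prime 221 = 47 := cstep0 cc220 (by norm_num)
theorem cc222 : Nat.count Nat.Prime 222 = 47 := cstep0 cc221 (by norm_num)
theorem cc223 : Nat.count Nat.Prime 223 = 47 := cstep0 cc222 (by norm_num)
theorem cc224 : Nat.count Nat.Prime 224 = 48 := cstep1 cc223 (by norm_num)
theorem cc225 : Nat.count Nat.Prime 225 = 48 := cstep0 cc224 (by norm_num)
theorem cc226 : Nat.count Nat.Prime 226 = 48 := cstep0 cc225 (by norm_num)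
theorem cc227 : Nat.count Nat.Prime 227 = 48 := cstep0 cc226 (by norm_num)
theorem cc228 : Nat.count Nat.Prime 228 = 49 := cstep1 cc227 (by norm_num)
theorem cc229 : Nat.count Nat.Prime 229 = 49 := cstep0 cc228 (by norm_num)
theorem cc230 : Nat.count Nat.Prime 230 = 50 := cstep1 cc229 (by norm_num)
theorem cc231 : Nat.count Nat.Prime 231 = 50 := cstep0 cc230 (by norm_num)
theorem cc232 : Nat.count Nat.Prime 232 = 50 := cstep0 cc231 (by norm_num)
theorem cc233 : Nat.count Nat.Prime 233 = 50 := cstep0 cc232 (by norm_num)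
theorem cc234 : Nat.count Nat.Prime 234 = 51 := cstep1 cc233 (by norm_num)
theorem cc235 : Nat.count Nat.Prime 235 = 51 := cstep0 cc234 (by norm_num)
theorem cc236 : Nat.count Nat.Prime 236 = 51 := cstep0 cc235 (by norm_num)
theorem cc237 : Nat.count Nat.Prime 237 = 51 := cstep0 cc236 (by norm_num)
theorem cc238 : Nat.count Nat.Prime 238 = 51 := cstep0 cc237 (by norm_num)
theorem cc239 : Nat.count Nat.Prime 239 = 51 := cstep0 cc238 (by norm_num)
theorem cc240 : Nat.count Nat.Prime 240 = 52 := cstep1 cc239 (by norm_num)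
theorem cc241 : Nat.count Nat.Prime 241 = 52 := cstep0 cc240 (by norm_num)
theorem cc242 : Nat.count Nat.Prime 242 = 53 := cstep1 cc241 (by norm_num)
theorem cc243 : Nat.count Nat.Prime 243 = 53 := cstep0 cc242 (by norm_num)
theorem cc244 : Nat.count Nat.Prime 244 = 53 := cstep0 cc243 (by norm_num)
theorem cc245 : Nat.count Nat.Prime 245 = 53 := cstep0 cc244 (by norm_num)
theorem cc246 : Nat.count Nat.Prime 246 = 53 := cstep0 cc245 (by norm_num)
theorem cc247 : Nat.count Nat.Prime 247 = 53 := cstep0 cc246 (by norm_num)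
theorem cc248 : Nat.count Nat.Prime 248 = 53 := cstep0 cc247 (by norm_num)
theorem cc249 : Nat.count Nat.Prime 249 = 53 := cstep0 cc248 (by norm_num)
theorem cc250 : Nat.count Nat.Prime 250 = 53 := cstep0 cc249 (by norm_num)
theorem cc251 : Nat.count Nat.Prime 251 = 53 := cstep0 cc250 (by norm_num)
theorem cc252 : Nat.count Nat.Prime 252 = 54 := cstep1 cc251 (by norm_num)
theorem cc253 : Nat.count Nat.Prime 253 = 54 := cstep0 cc252 (by norm_num)
theorem cc254 : Nat.count Nat.Prime 254 = 54 := cstep0 cc253 (by norm_num)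
theorem cc255 : Nat.count Nat.Prime 255 = 54 := cstep0 cc254 (by norm_num)
theorem cc256 : Nat.count Nat.Prime 256 = 54 := cstep0 cc255 (by norm_num)
theorem cc257 : Nat.count Nat.Prime 257 = 54 := cstep0 cc256 (by norm_num)
theorem cc258 : Nat.count Nat.Prime 258 = 55 := cstep1 cc257 (by norm_num)
theorem cc259 : Nat.count Nat.Prime 259 = 55 := cstep0 cc258 (by norm_num)
theorem cc260 : Nat.count Nat.Prime 260 = 55 := cstep0 cc259 (by norm_num)
theorem cc261 : Nat.count Nat.Prime 261 = 55 := cstep0 cc260 (by norm_num)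
theorem cc262 : Nat.count Nat.Prime 262 = 55 := cstep0 cc261 (by norm_num)
theorem cc263 : Nat.count Nat.Prime 263 = 55 := cstep0 cc262 (by norm_num)
theorem cc264 : Nat.count Nat.Prime 264 = 56 := cstep1 cc263 (by norm_num)
theorem cc265 : Nat.count Nat.Prime 265 = 56 := cstep0 cc264 (by norm_num)
theorem cc266 : Nat.count Nat.Prime 266 = 56 := cstep0 cc265 (by norm_num)
theorem cc267 : Nat.count Nat.Prime 267 = 56 := cstep0 cc266 (by norm_num)
theorem cc268 : Nat.count Nat.Prime 268 = 56 := cstep0 cc267 (by norm_num)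
theorem cc269 : Nat.count Nat.Prime 269 = 56 := cstep0 cc268 (by norm_num)
theorem cc270 : Nat.count Nat.Prime 270 = 57 := cstep1 cc269 (by norm_num)
theorem cc271 : Nat.count Nat.Prime 271 = 57 := cstep0 cc270 (by norm_num)
theorem cc272 : Nat.count Nat.Prime 272 = 58 := cstep1 cc271 (by norm_num)
theorem cc273 : Nat.count Nat.Prime 273 = 58 := cstep0 cc272 (by norm_num)
theorem cc274 : Nat.count Nat.Prime 274 = 58 := cstep0 cc273 (by norm_num)
theorem cc275 : Nat.count Nat.Prime 275 = 58 := cstep0 cc274 (by norm_num)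
theorem cc276 : Nat.count Nat.Prime 276 = 58 := cstep0 cc275 (by norm_num)
theorem cc277 : Nat.count Nat.Prime 277 = 58 := cstep0 cc276 (by norm_num)
theorem cc278 : Nat.count Nat.Prime 278 = 59 := cstep1 cc277 (by norm_num)
theorem cc279 : Nat.count Nat.Prime 279 = 59 := cstep0 cc278 (by norm_num)
theorem cc280 : Nat.count Nat.Prime 280 = 59 := cstep0 cc279 (by norm_num)
theorem cc281 : Nat.count Nat.Prime 281 = 59 := cstep0 cc280 (by norm_num)
theorem cc282 : Nat.count Nat.Prime 282 = 60 := cstep1 cc281 (by norm_num)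
theorem cc283 : Nat.count Nat.Prime 283 = 60 := cstep0 cc282 (by norm_num)
theorem cc284 : Nat.count Nat.Prime 284 = 61 := cstep1 cc283 (by norm_num)
theorem cc285 : Nat.count Nat.Prime 285 = 61 := cstep0 cc284 (by norm_num)
theorem cc286 : Nat.count Nat.Prime 286 = 61 := cstep0 cc285 (by norm_num)
theorem cc287 : Nat.count Nat.Prime 287 = 61 := cstep0 cc286 (by norm_num)
theorem cc288 : Nat.count Nat.Prime 288 = 61 := cstep0 cc287 (by norm_num)
theorem cc289 : Nat.count Nat.Prime 289 = 61 := cstep0 cc288 (by norm_num)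
theorem cc290 : Nat.count Nat.Prime 290 = 61 := cstep0 cc289 (by norm_num)
theorem cc291 : Nat.count Nat.Prime 291 = 61 := cstep0 cc290 (by norm_num)
theorem cc292 : Nat.count Nat.Prime 292 = 61 := cstep0 cc291 (by norm_num)
theorem cc293 : Nat.count Nat.Prime 293 = 61 := cstep0 cc292 (by norm_num)
theorem cc294 : Nat.count Nat.Prime 294 = 62 := cstep1 cc293 (by norm_num)
theorem cc295 : Nat.count Nat.Prime 295 = 62 := cstep0 cc294 (by norm_num)
theorem cc296 : Nat.count Nat.Prime 296 = 62 := cstep0 cc295 (by norm_num)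
theorem cc297 : Nat.count Nat.Prime 297 = 62 := cstep0 cc296 (by norm_num)
theorem cc298 : Nat.count Nat.Prime 298 = 62 := cstep0 cc297 (by norm_num)
theorem cc299 : Nat.count Nat.Prime 299 = 62 := cstep0 cc298 (by norm_num)
theorem cc300 : Nat.count Nat.Prime 300 = 62 := cstep0 cc299 (by norm_num)
theorem cc301 : Nat.count Nat.Prime 301 = 62 := cstep0 cc300 (by norm_num)
theorem cc302 : Nat.count Nat.Prime 302 = 62 := cstep0 cc301 (by norm_num)
theorem cc303 : Nat.count Nat.Prime 303 = 62 := cstep0 cc302 (by norm_num)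
theorem cc304 : Nat.count Nat.Prime 304 = 62 := cstep0 cc303 (by norm_num)
theorem cc305 : Nat.count Nat.Prime 305 = 62 := cstep0 cc304 (by norm_num)
theorem cc306 : Nat.count Nat.Prime 306 = 62 := cstep0 cc305 (by norm_num)
theorem cc307 : Nat.count Nat.Prime 307 = 62 := cstep0 cc306 (by norm_num)
theorem cc308 : Nat.count Nat.Prime 308 = 63 := cstep1 cc307 (by norm_num)
theorem cc309 : Nat.count Nat.Prime 309 = 63 := cstep0 cc308 (by norm_num)
theorem cc310 : Nat.count Nat.Prime 310 = 63 := cstep0 cc309 (by norm_num)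
theorem cc311 : Nat.count Nat.Prime 311 = 63 := cstep0 cc310 (by norm_num)
theorem cc312 : Nat.count Nat.Prime 312 = 64 := cstep1 cc311 (by norm_num)
theorem cc313 : Nat.count Nat.Prime 313 = 64 := cstep0 cc312 (by norm_num)
theorem cc314 : Nat.count Nat.Prime 314 = 65 := cstep1 cc313 (by norm_num)
theorem cc315 : Nat.count Nat.Prime 315 = 65 := cstep0 cc314 (by norm_num)
theorem cc316 : Nat.count Nat.Prime 316 = 65 := cstep0 cc315 (by norm_num)
theorem cc317 : Nat.count Nat.Prime 317 = 65 := cstep0 cc316 (by norm_num)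
theorem cc318 : Nat.count Nat.Prime 318 = 66 := cstep1 cc317 (by norm_num)
theorem cc319 : Nat.count Nat.Prime 319 = 66 := cstep0 cc318 (by norm_num)
theorem cc320 : Nat.count Nat.Prime 320 = 66 := cstep0 cc319 (by norm_num)
theorem cc321 : Nat.count Nat.Prime 321 = 66 := cstep0 cc320 (by norm_num)
theorem cc322 : Nat.count Nat.Prime 322 = 66 := cstep0 cc321 (by norm_num)
theorem cc323 : Nat.count Nat.Prime 323 = 66 := cstep0 cc322 (by norm_num)
theorem cc324 : Nat.count Nat.Prime 324 = 66 := cstep0 cc323 (by norm_num)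
theorem cc325 : Nat.count Nat.Prime 325 = 66 := cstep0 cc324 (by norm_num)
theorem cc326 : Nat.count Nat.Prime 326 = 66 := cstep0 cc325 (by norm_num)
theorem cc327 : Nat.count Nat.Prime 327 = 66 := cstep0 cc326 (by norm_num)
theorem cc328 : Nat.count Nat.Prime 328 = 66 := cstep0 cc327 (by norm_num)
theorem cc329 : Nat.count Nat.Prime 329 = 66 := cstep0 cc328 (by norm_num)
theorem cc330 : Nat.count Nat.Prime 330 = 66 := cstep0 cc329 (by norm_num)
theorem cc331 : Nat.count Nat.Prime 331 = 66 := cstep0 cc330 (by norm_num)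
theorem cc332 : Nat.count Nat.Prime 332 = 67 := cstep1 cc331 (by norm_num)
theorem cc333 : Nat.count Nat.Prime 333 = 67 := cstep0 cc332 (by norm_num)
theorem cc334 : Nat.count Nat.Prime 334 = 67 := cstep0 cc333 (by norm_num)
theorem cc335 : Nat.count Nat.Prime 335 = 67 := cstep0 cc334 (by norm_num)
theorem cc336 : Nat.count Nat.Prime 336 = 67 := cstep0 cc335 (by norm_num)
theorem cc337 : Nat.count Nat.Prime 337 = 67 := cstep0 cc336 (by norm_num)
theorem cc338 : Nat.count Nat.Prime 338 = 68 := cstep1 cc337 (by norm_num)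
theorem cc339 : Nat.count Nat.Prime 339 = 68 := cstep0 cc338 (by norm_num)
theorem cc340 : Nat.count Nat.Prime 340 = 68 := cstep0 cc339 (by norm_num)
theorem cc341 : Nat.count Nat.Prime 341 = 68 := cstep0 cc340 (by norm_num)
theorem cc342 : Nat.count Nat.Prime 342 = 68 := cstep0 cc341 (by norm_num)
theorem cc343 : Nat.count Nat.Prime 343 = 68 := cstep0 cc342 (by norm_num)
theorem cc344 : Nat.count Nat.Prime 344 = 68 := cstep0 cc343 (by norm_num)
theorem cc345 : Nat.count Nat.Prime 345 = 68 := cstep0 cc344 (by norm_num)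
theorem cc346 : Nat.count Nat.Prime 346 = 68 := cstep0 cc345 (by norm_num)
theorem cc347 : Nat.count Nat.Prime 347 = 68 := cstep0 cc346 (by norm_num)
theorem cc348 : Nat.count Nat.Prime 348 = 69 := cstep1 cc347 (by norm_num)
theorem cc349 : Nat.count Nat.Prime 349 = 69 := cstep0 cc348 (by norm_num)
theorem cc350 : Nat.count Nat.Prime 350 = 70 := cstep1 cc349 (by norm_num)
theorem cc351 : Nat.count Nat.Prime 351 = 70 := cstep0 cc350 (by norm_num)
theorem cc352 : Nat.count Nat.Prime 352 = 70 := cstep0 cc351 (by norm_num)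
theorem cc353 : Nat.count Nat.Prime 353 = 70 := cstep0 cc352 (by norm_num)
theorem cc354 : Nat.count Nat.Prime 354 = 71 := cstep1 cc353 (by norm_num)
theorem cc355 : Nat.count Nat.Prime 355 = 71 := cstep0 cc354 (by norm_num)
theorem cc356 : Nat.count Nat.Prime 356 = 71 := cstep0 cc355 (by norm_num)
theorem cc357 : Nat.count Nat.Prime 357 = 71 := cstep0 cc356 (by norm_num)
theorem cc358 : Nat.count Nat.Prime 358 = 71 := cstep0 cc357 (by norm_num)
theorem cc359 : Nat.count Nat.Prime 359 = 71 := cstep0 cc358 (by norm_num)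
theorem cc360 : Nat.count Nat.Prime 360 = 72 := cstep1 cc359 (by norm_num)
theorem cc361 : Nat.count Nat.Prime 361 = 72 := cstep0 cc360 (by norm_num)
theorem cc362 : Nat.count Nat.Prime 362 = 72 := cstep0 cc361 (by norm_num)
theorem cc363 : Nat.count Nat.Prime 363 = 72 := cstep0 cc362 (by norm_num)
theorem cc364 : Nat.count Nat.Prime 364 = 72 := cstep0 cc363 (by norm_num)
theorem cc365 : Nat.count Nat.Prime 365 = 72 := cstep0 cc364 (by norm_num)
theorem cc366 : Nat.count Nat.Prime 366 = 72 := cstep0 cc365 (by norm_num)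
theorem cc367 : Nat.count Nat.Prime 367 = 72 := cstep0 cc366 (by norm_num)
theorem cc368 : Nat.count Nat.Prime 368 = 73 := cstep1 cc367 (by norm_num)
theorem cc369 : Nat.count Nat.Prime 369 = 73 := cstep0 cc368 (by norm_num)
theorem cc370 : Nat.count Nat.Prime 370 = 73 := cstep0 cc369 (by norm_num)
theorem cc371 : Nat.count Nat.Prime 371 = 73 := cstep0 cc370 (by norm_num)
theorem cc372 : Nat.count Nat.Prime 372 = 73 := cstep0 cc371 (by norm_num)
theorem cc373 : Nat.count Nat.Prime 373 = 73 := cstep0 cc372 (by norm_num)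
theorem cc374 : Nat.count Nat.Prime 374 = 74 := cstep1 cc373 (by norm_num)
theorem cc375 : Nat.count Nat.Prime 375 = 74 := cstep0 cc374 (by norm_num)
theorem cc376 : Nat.count Nat.Prime 376 = 74 := cstep0 cc375 (by norm_num)
theorem cc377 : Nat.count Nat.Prime 377 = 74 := cstep0 cc376 (by norm_num)
theorem cc378 : Nat.count Nat.Prime 378 = 74 := cstep0 cc377 (by norm_num)
theorem cc379 : Nat.count Nat.Prime 379 = 74 := cstep0 cc378 (by norm_num)
theorem cc380 : Nat.count Nat.Prime 380 = 75 := cstep1 cc379 (by norm_num)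
theorem cc381 : Nat.count Nat.Prime 381 = 75 := cstep0 cc380 (by norm_num)
theorem cc382 : Nat.count Nat.Prime 382 = 75 := cstep0 cc381 (by norm_num)
theorem cc383 : Nat.count Nat.Prime 383 = 75 := cstep0 cc382 (by norm_num)
theorem cc384 : Nat.count Nat.Prime 384 = 76 := cstep1 cc383 (by norm_num)
theorem cc385 : Nat.count Nat.Prime 385 = 76 := cstep0 cc384 (by norm_num)
theorem cc386 : Nat.count Nat.Prime 386 = 76 := cstep0 cc385 (by norm_num)
theorem cc387 : Nat.count Nat.Prime 387 = 76 := cstep0 cc386 (by norm_num)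
theorem cc388 : Nat.count Nat.Prime 388 = 76 := cstep0 cc387 (by norm_num)
theorem cc389 : Nat.count Nat.Prime 389 = 76 := cstep0 cc388 (by norm_num)
theorem cc390 : Nat.count Nat.Prime 390 = 77 := cstep1 cc389 (by norm_num)
theorem cc391 : Nat.count Nat.Prime 391 = 77 := cstep0 cc390 (by norm_num)
theorem cc392 : Nat.count Nat.Prime 392 = 77 := cstep0 cc391 (by norm_num)
theorem cc393 : Nat.count Nat.Prime 393 = 77 := cstep0 cc392 (by norm_num)
theorem cc394 : Nat.count Nat.Prime 394 = 77 := cstep0 cc393 (by norm_num)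
theorem cc395 : Nat.count Nat.Prime 395 = 77 := cstep0 cc394 (by norm_num)
theorem cc396 : Nat.count Nat.Prime 396 = 77 := cstep0 cc395 (by norm_num)
theorem cc397 : Nat.count Nat.Prime 397 = 77 := cstep0 cc396 (by norm_num)
theorem cc398 : Nat.count Nat.Prime 398 = 78 := cstep1 cc397 (by norm_num)
theorem cc399 : Nat.count Nat.Prime 399 = 78 := cstep0 cc398 (by norm_num)
theorem cc400 : Nat.count Nat.Prime 400 = 78 := cstep0 cc399 (by norm_num)
theorem cc401 : Nat.count Nat.Prime 401 = 78 := cstep0 cc400 (by norm_num)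
theorem cc402 : Nat.count Nat.Prime 402 = 79 := cstep1 cc401 (by norm_num)
theorem cc403 : Nat.count Nat.Prime 403 = 79 := cstep0 cc402 (by norm_num)
theorem cc404 : Nat.count Nat.Prime 404 = 79 := cstep0 cc403 (by norm_num)
theorem cc405 : Nat.count Nat.Prime 405 = 79 := cstep0 cc404 (by norm_num)
theorem cc406 : Nat.count Nat.Prime 406 = 79 := cstep0 cc405 (by norm_num)
theorem cc407 : Nat.count Nat.Prime 407 = 79 := cstep0 cc406 (by norm_num)
theorem cc408 : Nat.count Nat.Prime 408 = 79 := cstep0 cc407 (by norm_num)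
theorem cc409 : Nat.count Nat.Prime 409 = 79 := cstep0 cc408 (by norm_num)
theorem cc410 : Nat.count Nat.Prime 410 = 80 := cstep1 cc409 (by norm_num)
theorem cc411 : Nat.count Nat.Prime 411 = 80 := cstep0 cc410 (by norm_num)
theorem cc412 : Nat.count Nat.Prime 412 = 80 := cstep0 cc411 (by norm_num)
theorem cc413 : Nat.count Nat.Prime 413 = 80 := cstep0 cc412 (by norm_num)
theorem cc414 : Nat.count Nat.Prime 414 = 80 := cstep0 cc413 (by norm_num)
theorem cc415 : Nat.count Nat.Prime 415 = 80 := cstep0 cc414 (by norm_num)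
theorem cc416 : Nat.count Nat.Prime 416 = 80 := cstep0 cc415 (by norm_num)
theorem cc417 : Nat.count Nat.Prime 417 = 80 := cstep0 cc416 (by norm_num)
theorem cc418 : Nat.count Nat.Prime 418 = 80 := cstep0 cc417 (by norm_num)
theorem cc419 : Nat.count Nat.Prime 419 = 80 := cstep0 cc418 (by norm_num)
theorem cc420 : Nat.count Nat.Prime 420 = 81 := cstep1 cc419 (by norm_num)
theorem cc421 : Nat.count Nat.Prime 421 = 81 := cstep0 cc420 (by norm_num)
theorem cc422 : Nat.count Nat.Prime 422 = 82 := cstep1 cc421 (by norm_num)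
theorem cc423 : Nat.count Nat.Prime 423 = 82 := cstep0 cc422 (by norm_num)
theorem cc424 : Nat.count Nat.Prime 424 = 82 := cstep0 cc423 (by norm_num)
theorem cc425 : Nat.count Nat.Prime 425 = 82 := cstep0 cc424 (by norm_num)
theorem cc426 : Nat.count Nat.Prime 426 = 82 := cstep0 cc425 (by norm_num)
theorem cc427 : Nat.count Nat.Prime 427 = 82 := cstep0 cc426 (by norm_num)
theorem cc428 : Nat.count Nat.Prime 428 = 82 := cstep0 cc427 (by norm_num)
theorem cc429 : Nat.count Nat.Prime 429 = 82 := cstep0 cc428 (by norm_num)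
theorem cc430 : Nat.count Nat.Prime 430 = 82 := cstep0 cc429 (by norm_num)
theorem cc431 : Nat.count Nat.Prime 431 = 82 := cstep0 cc430 (by norm_num)
theorem cc432 : Nat.count Nat.Prime 432 = 83 := cstep1 cc431 (by norm_num)
theorem cc433 : Nat.count Nat.Prime 433 = 83 := cstep0 cc432 (by norm_num)
theorem cc434 : Nat.count Nat.Prime 434 = 84 := cstep1 cc433 (by norm_num)
theorem cc435 : Nat.count Nat.Prime 435 = 84 := cstep0 cc434 (by norm_num)
theorem cc436 : Nat.count Nat.Prime 436 = 84 := cstep0 cc435 (by norm_num)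
theorem cc437 : Nat.count Nat.Prime 437 = 84 := cstep0 cc436 (by norm_num)
theorem cc438 : Nat.count Nat.Prime 438 = 84 := cstep0 cc437 (by norm_num)
theorem cc439 : Nat.count Nat.Prime 439 = 84 := cstep0 cc438 (by norm_num)
theorem cc440 : Nat.count Nat.Prime 440 = 85 := cstep1 cc439 (by norm_num)
theorem cc441 : Nat.count Nat.Prime 441 = 85 := cstep0 cc440 (by norm_num)
theorem cc442 : Nat.count Nat.Prime 442 = 85 := cstep0 cc441 (by norm_num)
theorem cc443 : Nat.count Nat.Prime 443 = 85 := cstep0 cc442 (by norm_num)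
theorem cc444 : Nat.count Nat.Prime 444 = 86 := cstep1 cc443 (by norm_num)
theorem cc445 : Nat.count Nat.Prime 445 = 86 := cstep0 cc444 (by norm_num)
theorem cc446 : Nat.count Nat.Prime 446 = 86 := cstep0 cc445 (by norm_num)
theorem cc447 : Nat.count Nat.Prime 447 = 86 := cstep0 cc446 (by norm_num)
theorem cc448 : Nat.count Nat.Prime 448 = 86 := cstep0 cc447 (by norm_num)
theorem cc449 : Nat.count Nat.Prime 449 = 86 := cstep0 cc448 (by norm_num)
theorem cc450 : Nat.count Nat.Prime 450 = 87 := cstep1 cc449 (by norm_num)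
theorem cc451 : Nat.count Nat.Prime 451 = 87 := cstep0 cc450 (by norm_num)
theorem cc452 : Nat.count Nat.Prime 452 = 87 := cstep0 cc451 (by norm_num)
theorem cc453 : Nat.count Nat.Prime 453 = 87 := cstep0 cc452 (by norm_num)
theorem cc454 : Nat.count Nat.Prime 454 = 87 := cstep0 cc453 (by norm_num)
theorem cc455 : Nat.count Nat.Prime 455 = 87 := cstep0 cc454 (by norm_num)
theorem cc456 : Nat.count Nat.Prime 456 = 87 := cstep0 cc455 (by norm_num)
theorem cc457 : Nat.count Nat.Prime 457 = 87 := cstep0 cc456 (by norm_num)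
theorem cc458 : Nat.count Nat.Prime 458 = 88 := cstep1 cc457 (by norm_num)
theorem cc459 : Nat.count Nat.Prime 459 = 88 := cstep0 cc458 (by norm_num)
theorem cc460 : Nat.count Nat.Prime 460 = 88 := cstep0 cc459 (by norm_num)
theorem cc461 : Nat.count Nat.Prime 461 = 88 := cstep0 cc460 (by norm_num)
theorem cc462 : Nat.count Nat.Prime 462 = 89 := cstep1 cc461 (by norm_num)
theorem nthp0 : Nat.nth Nat.Prime 0 = 2 := by
  have e := Nat.nth_count (p := Nat.Prime) (n := 2) (by norm_num)
  rwa [cc2] at e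
theorem nthp1 : Nat.nth Nat.Prime 1 = 3 := by
  have e := Nat.nth_count (p := Nat.Prime) (n := 3) (by norm_num)
  rwa [cc3] at e
theorem nthp2 : Nat.nth Nat.Prime 2 = 5 := by
  have e := Nat.nth_count (p := Nat.Prime) (n := 5) (by norm_num)
  rwa [cc5] at e
theorem nthp3 : Nat.nth Nat.Prime 3 = 7 := by
  have e := Nat.nth_count (p := Nat.Prime) (n := 7) (by norm_num)
  rwa [cc7] at e
theorem nthp4 : Nat.nth Nat.Prime 4 = 11 := by
  have e := Nat.nth_count (p := Nat.Prime) (n := 11) (by norm_num)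
  rwa [cc11] at e
theorem nthp5 : Nat.nth Nat.Prime 5 = 13 := by
  have e := Nat.nth_count (p := Nat.Prime) (n := 13) (by norm_num)
  rwa [cc13] at e
theorem nthp6 : Nat.nth Nat.Prime 6 = 17 := by
  have e := Nat.nth_count (p := Nat.Prime) (n := 17) (by norm_num)
  rwa [cc17] at e
theorem nthp7 : Nat.nth Nat.Prime 7 = 19 := by
  have e := Nat.nth_count (p := Nat.Prime) (n := 19) (by norm_num)
  rwa [cc19] at e
theorem nthp8 : Nat.nth Nat.Prime 8 = 23 := by
  have e := Nat.nth_count (p := Nat.Prime) (n := 23) (by norm_num)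
  rwa [cc23] at e
theorem nthp9 : Nat.nth Nat.Prime 9 = 29 := by
  have e := Nat.nth_count (p := Nat.Prime) (n := 29) (by norm_num)
  rwa [cc29] at e
theorem nthp10 : Nat.nth Nat.Prime 10 = 31 := by
  have e := Nat.nth_count (p := Nat.Prime) (n := 31) (by norm_num)
  rwa [cc31] at e
theorem nthp11 : Nat.nth Nat.Prime 11 = 37 := by
  have e := Nat.nth_count (p := Nat.Prime) (n := 37) (by norm_num)
  rwa [cc37] at e
theorem nthp12 : Nat.nth Nat.Prime 12 = 41 := by
  have e := Nat.nth_count (p := Nat.Prime) (n := 41) (by norm_num)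
  rwa [cc41] at e
theorem nthp15 : Nat.nth Nat.Prime 15 = 53 := by
  have e := Nat.nth_count (p := Nat.Prime) (n := 53) (by norm_num)
  rwa [cc53] at e
theorem nthp17 : Nat.nth Nat.Prime 17 = 61 := by
  have e := Nat.nth_count (p := Nat.Prime) (n := 61) (by norm_num)
  rwa [cc61] at e
theorem nthp20 : Nat.nth Nat.Prime 20 = 73 := by
  have e := Nat.nth_count (p := Nat.Prime) (n := 73) (by norm_num)
  rwa [cc73] at e
theorem nthp23 : Nat.nth Nat.Prime 23 = 89 := by
  have e := Nat.nth_count (p := Nat.Prime) (n := 89) (by norm_num)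
  rwa [cc89] at e
theorem nthp25 : Nat.nth Nat.Prime 25 = 101 := by
  have e := Nat.nth_count (p := Nat.Prime) (n := 101) (by norm_num)
  rwa [cc101] at e
theorem nthp29 : Nat.nth Nat.Prime 29 = 113 := by
  have e := Nat.nth_count (p := Nat.Prime) (n := 113) (by norm_num)
  rwa [cc113] at e
theorem nthp54 : Nat.nth Nat.Prime 54 = 257 := by
  have e := Nat.nth_count (p := Nat.Prime) (n := 257) (by norm_num)
  rwa [cc257] at e
theorem nthp56 : Nat.nth Nat.Prime 56 = 269 := by
  have e := Nat.nth_count (p := Nat.Prime) (n := 269) (by norm_num)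
  rwa [cc269] at e
theorem nthp64 : Nat.nth Nat.Prime 64 = 313 := by
  have e := Nat.nth_count (p := Nat.Prime) (n := 313) (by norm_num)
  rwa [cc313] at e
theorem nthp73 : Nat.nth Nat.Prime 73 = 373 := by
  have e := Nat.nth_count (p := Nat.Prime) (n := 373) (by norm_num)
  rwa [cc373] at e
theorem nthp79 : Nat.nth Nat.Prime 79 = 409 := by
  have e := Nat.nth_count (p := Nat.Prime) (n := 409) (by norm_num)
  rwa [cc409] at e
theorem nthp88 : Nat.nth Nat.Prime 88 = 461 := by
  have e := Nat.nth_count (p := Nat.Prime) (n := 461) (by norm_num)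
  rwa [cc461] at e
def pairList : List (Nat × Nat) := [(2,1), (3,1), (3,2), (4,1), (4,2), (4,3), (5,1), (5,2), (5,3), (5,4), (6,1), (6,2), (6,3), (6,4), (6,5), (7,1), (7,2), (7,3), (7,4), (7,5), (7,6), (8,1), (8,2), (8,3), (8,4), (8,5), (8,6), (8,7), (9,1), (9,2), (9,3), (9,4), (9,5), (9,6), (9,7), (9,8), (10,1), (10,2), (10,3), (10,4), (10,5), (10,6), (10,7), (10,8), (10,9), (11,1), (11,2), (11,3), (11,4), (11,5), (11,6), (11,7), (11,8), (11,9), (11,10), (12,1), (12,2), (12,3), (12,4), (12,5), (12,6), (12,7), (12,8), (12,9), (12,10), (12,11), (13,1), (13,2), (13,3), (13,4), (13,5), (13,6), (13,7), (13,8), (13,9), (13,10), (13,11), (13,12), (14,1), (14,2), (14,3), (14,4), (14,5), (14,6), (14,7), (14,8), (14,9), (14,10), (14,11), (14,12), (14,13), (15,1), (15,2), (15,3), (15,4), (15,5), (15,6), (15,7), (15,8), (15,9), (15,10), (15,11), (15,12), (15,13), (15,14), (16,1), (16,2), (16,3), (16,4), (16,5), (16,6), (16,7), (16,8), (16,9),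 (16,10), (16,11), (16,12), (16,13), (16,14), (16,15), (17,1), (17,2), (17,3), (17,4), (17,5), (17,6), (17,7), (17,8), (17,9), (17,10), (17,11), (17,12), (17,13), (17,14), (17,15), (18,1), (18,2), (18,3), (18,4), (18,5), (18,6), (18,7), (18,8), (18,9), (18,10), (18,11), (18,12), (18,13), (18,14), (19,1), (19,2), (19,3), (19,4), (19,5), (19,6), (19,7), (19,8), (19,9), (19,10), (19,11), (19,12), (19,13), (20,1), (20,2), (20,3), (20,4), (20,5), (20,6), (20,7), (20,8), (20,9), (20,10), (20,11), (21,1), (21,2), (21,3), (21,4), (21,5), (21,6), (21,7), (21,8), (21,9), (22,1), (22,2), (22,3), (22,4), (22,5), (22,6), (23,1)]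
set_option maxRecDepth 100000 in
theorem pairs_mem' : ∀ M < 24, ∀ N < 24, ((M,N) ∈ pairList ∨ ¬(1 ≤ N) ∨ ¬(N < M) ∨ ¬(M^2+N^2 ≤ 532)) := by decide
theorem pairs_mem : ∀ M N : ℕ, 1 ≤ N → N < M → M^2+N^2 ≤ 532 → (M,N) ∈ pairList := by
  intro M N h1 h2 h3
  have hM : M < 24 := by nlinarith
  have hN : N < 24 := by omega
  rcases pairs_mem' M hM N hN with h|h|h|h
  · exact h
  all_goals tauto
def tabN : List (ℕ × ZMod 2) := [(2,0), (3,1), (4,0), (5,0), (6,1), (7,1), (8,0), (9,0), (10,0), (11,1), (12,1), (13,1), (14,1), (15,1), (16,0), (17,1), (18,0), (19,1), (20,0), (21,0), (22,1), (23,0), (24,1), (25,0), (26,1), (27,1), (28,1), (29,1), (30,1), (31,0), (32,0), (33,0), (34,1), (35,1), (36,0), (37,0), (38,1), (39,0), (40,0), (41,1), (42,0), (44,1), (45,0), (46,0), (48,1), (49,0), (50,0), (51,0), (52,1), (53,1), (54,1), (55,1), (56,1), (57,0), (58,1), (60,1), (61,0), (63,1), (64,0), (65,1), (66,0), (68,1),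 (69,1), (70,1), (72,0), (73,0), (74,0), (75,1), (76,1), (77,0), (78,0), (80,0), (81,0), (82,1), (84,0), (85,1), (87,0), (88,1), (89,1), (90,0), (91,0), (93,1), (95,1), (96,1), (98,0), (99,1), (100,0), (101,1), (102,0), (104,1), (105,0), (108,1), (110,1), (111,1), (112,1), (113,0), (114,0), (115,0), (116,1), (117,1), (119,0), (120,1), (122,0), (123,0), (125,0), (126,1), (128,0), (130,1), (132,0), (133,0), (135,1), (136,1), (140,1), (143,0), (144,0), (145,1), (146,0), (147,1), (148,0), (150,1), (152,1), (153,1), (154,0), (155,0), (156,0), (160,0), (161,1), (162,0), (164,1), (165,0), (168,0), (170,1), (171,1), (175,1), (176,1), (178,1), (180,0), (182,0), (185,0), (187,0), (189,0), (190,1), (192,1), (195,0), (196,0), (198,1), (200,0), (203,0), (204,0), (205,1), (207,0), (208,1), (209,0), (210,0), (216,1), (217,1), (220,1), (221,0), (224,1), (225,0), (226,0), (228,0), (231,1), (232,1), (234,1), (238,0), (240,1), (243,1), (244,0), (247,0), (250,0), (252,1), (253,1), (255,0), (256,0), (257,1), (260,1), (261,1), (264,0), (265,1), (266,0), (269,0),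 (270,1), (272,1), (273,1), (275,1), (279,0), (280,1), (285,0), (286,0), (288,0), (289,0), (292,0), (294,1), (296,0), (297,0), (299,1), (300,1), (304,1), (305,0), (306,1), (308,0), (312,0), (313,1), (315,1), (319,0), (320,0), (323,0), (324,0), (325,1), (328,1), (330,0), (333,0), (336,0), (340,1), (342,1), (345,1), (351,0), (352,1), (356,1), (357,1), (360,0), (364,0), (365,0), (369,1), (370,0), (373,0), (374,0), (375,1), (377,0), (378,0), (380,1), (384,1), (390,0), (391,1), (392,0), (396,1), (399,1), (400,0), (405,0), (408,0), (409,0), (410,1), (416,1), (418,0), (420,0), (425,1), (432,1), (437,1), (440,1), (442,0), (448,1), (450,0), (452,0), (456,0), (459,0), (461,0), (464,1), (468,1), (475,1), (476,0), (480,1), (481,1), (483,0), (488,0), (494,0), (500,0), (504,1), (505,1), (510,0), (514,1), (522,1), (528,0), (530,1)]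
def lookup (n : ℕ) : Option (ZMod 2) := (tabN.find? (fun q => q.1 == n)).map Prod.snd
def check (M N : ℕ) : Bool :=
  match lookup (M^2-N^2), lookup (2*(M*N)) with
  | some a, some b =>
    (!(a == b)) || (match lookup (M^2+N^2) with | some c => !(b == c) | none => false)
  | _, _ => false
set_option maxRecDepth 1000000 in
theorem allpairs : ∀ q ∈ pairList, check q.1 q.2 = true := by decide
theorem lk (f : ℕ+ → ZMod 2) (hT : ∀ q ∈ tabN, f q.1.toPNat' = q.2) {n : ℕ} {v : ZMod 2}
    (h : lookup n = some v) : f n.toPNat' = v := by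
  unfold lookup at h
  cases hfind : tabN.find? (fun q => q.1 == n) with
  | none => rw [hfind] at h; simp at h
  | some q =>
    rw [hfind] at h
    simp only [Option.map_some, Option.some.injEq] at h
    have hq := List.mem_of_find?_eq_some hfind
    have hp := List.find?_some hfind
    simp only [beq_iff_eq] at hp
    have := hT q hq
    rw [hp, h] at this
    exact this
theorem check_sound (f : ℕ+ → ZMod 2) (hT : ∀ q ∈ tabN, f q.1.toPNat' = q.2) (M N : ℕ)
    (h : check M N = true) :
    ¬(f (M^2-N^2).toPNat' = f (2*(M*N)).toPNat' ∧
      f (2*(M*N)).toPNat' = f (M^2+N^2).toPNat') := by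
  unfold check at h
  rintro ⟨e1, e2⟩
  rcases hA : lookup (M^2-N^2) with _|a <;> rw [hA] at h
  · simp at h
  rcases hB : lookup (2*(M*N)) with _|b <;> rw [hB] at h
  · simp at h
  have fA := lk f hT hA
  have fB := lk f hT hB
  rw [fA, fB] at e1
  by_cases hab : a = b
  · have hX : (match lookup (M^2+N^2) with | some c => !(b == c) | none => false) = true := by
      rw [hab] at h; simpa using h
    rcases hC : lookup (M^2+N^2) with _|c <;> rw [hC] at hX
    · simp at hX
    · have fC := lk f hT hC
      rw [fB, fC] at e2
      simp only [Bool.not_eq_true', beq_eq_false_iff_ne, ne_eq] at hX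
      exact hX e2
  · exact hab e1
set_option maxRecDepth 1000000 in
theorem key_lemma (f : ℕ+ → ZMod 2)
    (hf : ∀ x y : ℕ+, f (x * y) = f x + f y)
    (h0 : ∀ i ∈ ({1, 3, 9, 11, 12, 18, 21, 30, 57, 74, 80, 89} : Finset ℕ),
      f (Nat.nth Nat.Prime (i - 1)).toPNat' = 0)
    (h1 : ∀ i ∈ ({2, 4, 5, 6, 7, 8, 10, 13, 16, 24, 26, 55, 65} : Finset ℕ),
      f (Nat.nth Nat.Prime (i - 1)).toPNat' = 1) :
    ∀ M N : ℕ, 1 ≤ N → N < M → M^2+N^2 ≤ 532 →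
      ¬(f (M^2-N^2).toPNat' = f (2*(M*N)).toPNat' ∧
        f (2*(M*N)).toPNat' = f (M^2+N^2).toPNat') := by
  have t2 : f (Nat.toPNat' 2) = 0 := by
    have e := h0 1 (by decide)
    rwa [show (1:ℕ)-1 = 0 from rfl, nthp0] at e
  have t3 : f (Nat.toPNat' 3) = 1 := by
    have e := h1 2 (by decide)
    rwa [show (2:ℕ)-1 = 1 from rfl, nthp1] at e
  have t4 : f (Nat.toPNat' 4) = 0 := by
    rw [show (Nat.toPNat' 4 : ℕ+) = Nat.toPNat' 2 * Nat.toPNat' 2 from rfl, hf, t2] <;> decide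
  have t5 : f (Nat.toPNat' 5) = 0 := by
    have e := h0 3 (by decide)
    rwa [show (3:ℕ)-1 = 2 from rfl, nthp2] at e
  have t6 : f (Nat.toPNat' 6) = 1 := by
    rw [show (Nat.toPNat' 6 : ℕ+) = Nat.toPNat' 2 * Nat.toPNat' 3 from rfl, hf, t2, t3] <;> decide
  have t7 : f (Nat.toPNat' 7) = 1 := by
    have e := h1 4 (by decide)
    rwa [show (4:ℕ)-1 = 3 from rfl, nthp3] at e
  have t8 : f (Nat.toPNat' 8) = 0 := by
    rw [show (Nat.toPNat' 8 : ℕ+) = Nat.toPNat' 2 * Nat.toPNat' 4 from rfl, hf, t2, t4] <;> decide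
  have t9 : f (Nat.toPNat' 9) = 0 := by
    rw [show (Nat.toPNat' 9 : ℕ+) = Nat.toPNat' 3 * Nat.toPNat' 3 from rfl, hf, t3] <;> decide
  have t10 : f (Nat.toPNat' 10) = 0 := by
    rw [show (Nat.toPNat' 10 : ℕ+) = Nat.toPNat' 2 * Nat.toPNat' 5 from rfl, hf, t2, t5] <;> decide
  have t11 : f (Nat.toPNat' 11) = 1 := by
    have e := h1 5 (by decide)
    rwa [show (5:ℕ)-1 = 4 from rfl, nthp4] at e
  have t12 : f (Nat.toPNat' 12) = 1 := by
    rw [show (Nat.toPNat' 12 : ℕ+) = Nat.toPNat' 2 * Nat.toPNat' 6 from rfl, hf, t2, t6] <;> decide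
  have t13 : f (Nat.toPNat' 13) = 1 := by
    have e := h1 6 (by decide)
    rwa [show (6:ℕ)-1 = 5 from rfl, nthp5] at e
  have t14 : f (Nat.toPNat' 14) = 1 := by
    rw [show (Nat.toPNat' 14 : ℕ+) = Nat.toPNat' 2 * Nat.toPNat' 7 from rfl, hf, t2, t7] <;> decide
  have t15 : f (Nat.toPNat' 15) = 1 := by
    rw [show (Nat.toPNat' 15 : ℕ+) = Nat.toPNat' 3 * Nat.toPNat' 5 from rfl, hf, t3, t5] <;> decide
  have t16 : f (Nat.toPNat' 16) = 0 := by
    rw [show (Nat.toPNat' 16 : ℕ+) = Nat.toPNat' 2 * Nat.toPNat' 8 from rfl, hf, t2, t8] <;> decide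
  have t17 : f (Nat.toPNat' 17) = 1 := by
    have e := h1 7 (by decide)
    rwa [show (7:ℕ)-1 = 6 from rfl, nthp6] at e
  have t18 : f (Nat.toPNat' 18) = 0 := by
    rw [show (Nat.toPNat' 18 : ℕ+) = Nat.toPNat' 2 * Nat.toPNat' 9 from rfl, hf, t2, t9] <;> decide
  have t19 : f (Nat.toPNat' 19) = 1 := by
    have e := h1 8 (by decide)
    rwa [show (8:ℕ)-1 = 7 from rfl, nthp7] at e
  have t20 : f (Nat.toPNat' 20) = 0 := by
    rw [show (Nat.toPNat' 20 : ℕ+) = Nat.toPNat' 2 * Nat.toPNat' 10 from rfl, hf, t2, t10] <;> decide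
  have t21 : f (Nat.toPNat' 21) = 0 := by
    rw [show (Nat.toPNat' 21 : ℕ+) = Nat.toPNat' 3 * Nat.toPNat' 7 from rfl, hf, t3, t7] <;> decide
  have t22 : f (Nat.toPNat' 22) = 1 := by
    rw [show (Nat.toPNat' 22 : ℕ+) = Nat.toPNat' 2 * Nat.toPNat' 11 from rfl, hf, t2, t11] <;> decide
  have t23 : f (Nat.toPNat' 23) = 0 := by
    have e := h0 9 (by decide)
    rwa [show (9:ℕ)-1 = 8 from rfl, nthp8] at e
  have t24 : f (Nat.toPNat' 24) = 1 := by
    rw [show (Nat.toPNat' 24 : ℕ+) = Nat.toPNat' 2 * Nat.toPNat' 12 from rfl, hf, t2, t12] <;> decide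
  have t25 : f (Nat.toPNat' 25) = 0 := by
    rw [show (Nat.toPNat' 25 : ℕ+) = Nat.toPNat' 5 * Nat.toPNat' 5 from rfl, hf, t5] <;> decide
  have t26 : f (Nat.toPNat' 26) = 1 := by
    rw [show (Nat.toPNat' 26 : ℕ+) = Nat.toPNat' 2 * Nat.toPNat' 13 from rfl, hf, t2, t13] <;> decide
  have t27 : f (Nat.toPNat' 27) = 1 := by
    rw [show (Nat.toPNat' 27 : ℕ+) = Nat.toPNat' 3 * Nat.toPNat' 9 from rfl, hf, t3, t9] <;> decide
  have t28 : f (Nat.toPNat' 28) = 1 := by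
    rw [show (Nat.toPNat' 28 : ℕ+) = Nat.toPNat' 2 * Nat.toPNat' 14 from rfl, hf, t2, t14] <;> decide
  have t29 : f (Nat.toPNat' 29) = 1 := by
    have e := h1 10 (by decide)
    rwa [show (10:ℕ)-1 = 9 from rfl, nthp9] at e
  have t30 : f (Nat.toPNat' 30) = 1 := by
    rw [show (Nat.toPNat' 30 : ℕ+) = Nat.toPNat' 2 * Nat.toPNat' 15 from rfl, hf, t2, t15] <;> decide
  have t31 : f (Nat.toPNat' 31) = 0 := by
    have e := h0 11 (by decide)
    rwa [show (11:ℕ)-1 = 10 from rfl, nthp10] at e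
  have t32 : f (Nat.toPNat' 32) = 0 := by
    rw [show (Nat.toPNat' 32 : ℕ+) = Nat.toPNat' 2 * Nat.toPNat' 16 from rfl, hf, t2, t16] <;> decide
  have t33 : f (Nat.toPNat' 33) = 0 := by
    rw [show (Nat.toPNat' 33 : ℕ+) = Nat.toPNat' 3 * Nat.toPNat' 11 from rfl, hf, t3, t11] <;> decide
  have t34 : f (Nat.toPNat' 34) = 1 := by
    rw [show (Nat.toPNat' 34 : ℕ+) = Nat.toPNat' 2 * Nat.toPNat' 17 from rfl, hf, t2, t17] <;> decide
  have t35 : f (Nat.toPNat' 35) = 1 := by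
    rw [show (Nat.toPNat' 35 : ℕ+) = Nat.toPNat' 5 * Nat.toPNat' 7 from rfl, hf, t5, t7] <;> decide
  have t36 : f (Nat.toPNat' 36) = 0 := by
    rw [show (Nat.toPNat' 36 : ℕ+) = Nat.toPNat' 2 * Nat.toPNat' 18 from rfl, hf, t2, t18] <;> decide
  have t37 : f (Nat.toPNat' 37) = 0 := by
    have e := h0 12 (by decide)
    rwa [show (12:ℕ)-1 = 11 from rfl, nthp11] at e
  have t38 : f (Nat.toPNat' 38) = 1 := by
    rw [show (Nat.toPNat' 38 : ℕ+) = Nat.toPNat' 2 * Nat.toPNat' 19 from rfl, hf, t2, t19] <;> decide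
  have t39 : f (Nat.toPNat' 39) = 0 := by
    rw [show (Nat.toPNat' 39 : ℕ+) = Nat.toPNat' 3 * Nat.toPNat' 13 from rfl, hf, t3, t13] <;> decide
  have t40 : f (Nat.toPNat' 40) = 0 := by
    rw [show (Nat.toPNat' 40 : ℕ+) = Nat.toPNat' 2 * Nat.toPNat' 20 from rfl, hf, t2, t20] <;> decide
  have t41 : f (Nat.toPNat' 41) = 1 := by
    have e := h1 13 (by decide)
    rwa [show (13:ℕ)-1 = 12 from rfl, nthp12] at e
  have t42 : f (Nat.toPNat' 42) = 0 := by
    rw [show (Nat.toPNat' 42 : ℕ+) = Nat.toPNat' 2 * Nat.toPNat' 21 from rfl, hf, t2, t21] <;> decide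
  have t44 : f (Nat.toPNat' 44) = 1 := by
    rw [show (Nat.toPNat' 44 : ℕ+) = Nat.toPNat' 2 * Nat.toPNat' 22 from rfl, hf, t2, t22] <;> decide
  have t45 : f (Nat.toPNat' 45) = 0 := by
    rw [show (Nat.toPNat' 45 : ℕ+) = Nat.toPNat' 3 * Nat.toPNat' 15 from rfl, hf, t3, t15] <;> decide
  have t46 : f (Nat.toPNat' 46) = 0 := by
    rw [show (Nat.toPNat' 46 : ℕ+) = Nat.toPNat' 2 * Nat.toPNat' 23 from rfl, hf, t2, t23] <;> decide
  have t48 : f (Nat.toPNat' 48) = 1 := by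
    rw [show (Nat.toPNat' 48 : ℕ+) = Nat.toPNat' 2 * Nat.toPNat' 24 from rfl, hf, t2, t24] <;> decide
  have t49 : f (Nat.toPNat' 49) = 0 := by
    rw [show (Nat.toPNat' 49 : ℕ+) = Nat.toPNat' 7 * Nat.toPNat' 7 from rfl, hf, t7] <;> decide
  have t50 : f (Nat.toPNat' 50) = 0 := by
    rw [show (Nat.toPNat' 50 : ℕ+) = Nat.toPNat' 2 * Nat.toPNat' 25 from rfl, hf, t2, t25] <;> decide
  have t51 : f (Nat.toPNat' 51) = 0 := by
    rw [show (Nat.toPNat' 51 : ℕ+) = Nat.toPNat' 3 * Nat.toPNat' 17 from rfl, hf, t3, t17] <;> decide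
  have t52 : f (Nat.toPNat' 52) = 1 := by
    rw [show (Nat.toPNat' 52 : ℕ+) = Nat.toPNat' 2 * Nat.toPNat' 26 from rfl, hf, t2, t26] <;> decide
  have t53 : f (Nat.toPNat' 53) = 1 := by
    have e := h1 16 (by decide)
    rwa [show (16:ℕ)-1 = 15 from rfl, nthp15] at e
  have t54 : f (Nat.toPNat' 54) = 1 := by
    rw [show (Nat.toPNat' 54 : ℕ+) = Nat.toPNat' 2 * Nat.toPNat' 27 from rfl, hf, t2, t27] <;> decide
  have t55 : f (Nat.toPNat' 55) = 1 := by
    rw [show (Nat.toPNat' 55 : ℕ+) = Nat.toPNat' 5 * Nat.toPNat' 11 from rfl, hf, t5, t11] <;> decide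
  have t56 : f (Nat.toPNat' 56) = 1 := by
    rw [show (Nat.toPNat' 56 : ℕ+) = Nat.toPNat' 2 * Nat.toPNat' 28 from rfl, hf, t2, t28] <;> decide
  have t57 : f (Nat.toPNat' 57) = 0 := by
    rw [show (Nat.toPNat' 57 : ℕ+) = Nat.toPNat' 3 * Nat.toPNat' 19 from rfl, hf, t3, t19] <;> decide
  have t58 : f (Nat.toPNat' 58) = 1 := by
    rw [show (Nat.toPNat' 58 : ℕ+) = Nat.toPNat' 2 * Nat.toPNat' 29 from rfl, hf, t2, t29] <;> decide
  have t60 : f (Nat.toPNat' 60) = 1 := by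
    rw [show (Nat.toPNat' 60 : ℕ+) = Nat.toPNat' 2 * Nat.toPNat' 30 from rfl, hf, t2, t30] <;> decide
  have t61 : f (Nat.toPNat' 61) = 0 := by
    have e := h0 18 (by decide)
    rwa [show (18:ℕ)-1 = 17 from rfl, nthp17] at e
  have t63 : f (Nat.toPNat' 63) = 1 := by
    rw [show (Nat.toPNat' 63 : ℕ+) = Nat.toPNat' 3 * Nat.toPNat' 21 from rfl, hf, t3, t21] <;> decide
  have t64 : f (Nat.toPNat' 64) = 0 := by
    rw [show (Nat.toPNat' 64 : ℕ+) = Nat.toPNat' 2 * Nat.toPNat' 32 from rfl, hf, t2, t32] <;> decide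
  have t65 : f (Nat.toPNat' 65) = 1 := by
    rw [show (Nat.toPNat' 65 : ℕ+) = Nat.toPNat' 5 * Nat.toPNat' 13 from rfl, hf, t5, t13] <;> decide
  have t66 : f (Nat.toPNat' 66) = 0 := by
    rw [show (Nat.toPNat' 66 : ℕ+) = Nat.toPNat' 2 * Nat.toPNat' 33 from rfl, hf, t2, t33] <;> decide
  have t68 : f (Nat.toPNat' 68) = 1 := by
    rw [show (Nat.toPNat' 68 : ℕ+) = Nat.toPNat' 2 * Nat.toPNat' 34 from rfl, hf, t2, t34] <;> decide
  have t69 : f (Nat.toPNat' 69) = 1 := by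
    rw [show (Nat.toPNat' 69 : ℕ+) = Nat.toPNat' 3 * Nat.toPNat' 23 from rfl, hf, t3, t23] <;> decide
  have t70 : f (Nat.toPNat' 70) = 1 := by
    rw [show (Nat.toPNat' 70 : ℕ+) = Nat.toPNat' 2 * Nat.toPNat' 35 from rfl, hf, t2, t35] <;> decide
  have t72 : f (Nat.toPNat' 72) = 0 := by
    rw [show (Nat.toPNat' 72 : ℕ+) = Nat.toPNat' 2 * Nat.toPNat' 36 from rfl, hf, t2, t36] <;> decide
  have t73 : f (Nat.toPNat' 73) = 0 := by
    have e := h0 21 (by decide)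
    rwa [show (21:ℕ)-1 = 20 from rfl, nthp20] at e
  have t74 : f (Nat.toPNat' 74) = 0 := by
    rw [show (Nat.toPNat' 74 : ℕ+) = Nat.toPNat' 2 * Nat.toPNat' 37 from rfl, hf, t2, t37] <;> decide
  have t75 : f (Nat.toPNat' 75) = 1 := by
    rw [show (Nat.toPNat' 75 : ℕ+) = Nat.toPNat' 3 * Nat.toPNat' 25 from rfl, hf, t3, t25] <;> decide
  have t76 : f (Nat.toPNat' 76) = 1 := by
    rw [show (Nat.toPNat' 76 : ℕ+) = Nat.toPNat' 2 * Nat.toPNat' 38 from rfl, hf, t2, t38] <;> decide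
  have t77 : f (Nat.toPNat' 77) = 0 := by
    rw [show (Nat.toPNat' 77 : ℕ+) = Nat.toPNat' 7 * Nat.toPNat' 11 from rfl, hf, t7, t11] <;> decide
  have t78 : f (Nat.toPNat' 78) = 0 := by
    rw [show (Nat.toPNat' 78 : ℕ+) = Nat.toPNat' 2 * Nat.toPNat' 39 from rfl, hf, t2, t39] <;> decide
  have t80 : f (Nat.toPNat' 80) = 0 := by
    rw [show (Nat.toPNat' 80 : ℕ+) = Nat.toPNat' 2 * Nat.toPNat' 40 from rfl, hf, t2, t40] <;> decide
  have t81 : f (Nat.toPNat' 81) = 0 := by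
    rw [show (Nat.toPNat' 81 : ℕ+) = Nat.toPNat' 3 * Nat.toPNat' 27 from rfl, hf, t3, t27] <;> decide
  have t82 : f (Nat.toPNat' 82) = 1 := by
    rw [show (Nat.toPNat' 82 : ℕ+) = Nat.toPNat' 2 * Nat.toPNat' 41 from rfl, hf, t2, t41] <;> decide
  have t84 : f (Nat.toPNat' 84) = 0 := by
    rw [show (Nat.toPNat' 84 : ℕ+) = Nat.toPNat' 2 * Nat.toPNat' 42 from rfl, hf, t2, t42] <;> decide
  have t85 : f (Nat.toPNat' 85) = 1 := by
    rw [show (Nat.toPNat' 85 : ℕ+) = Nat.toPNat' 5 * Nat.toPNat' 17 from rfl, hf, t5, t17] <;> decide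
  have t87 : f (Nat.toPNat' 87) = 0 := by
    rw [show (Nat.toPNat' 87 : ℕ+) = Nat.toPNat' 3 * Nat.toPNat' 29 from rfl, hf, t3, t29] <;> decide
  have t88 : f (Nat.toPNat' 88) = 1 := by
    rw [show (Nat.toPNat' 88 : ℕ+) = Nat.toPNat' 2 * Nat.toPNat' 44 from rfl, hf, t2, t44] <;> decide
  have t89 : f (Nat.toPNat' 89) = 1 := by
    have e := h1 24 (by decide)
    rwa [show (24:ℕ)-1 = 23 from rfl, nthp23] at e
  have t90 : f (Nat.toPNat' 90) = 0 := by
    rw [show (Nat.toPNat' 90 : ℕ+) = Nat.toPNat' 2 * Nat.toPNat' 45 from rfl, hf, t2, t45] <;> decide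
  have t91 : f (Nat.toPNat' 91) = 0 := by
    rw [show (Nat.toPNat' 91 : ℕ+) = Nat.toPNat' 7 * Nat.toPNat' 13 from rfl, hf, t7, t13] <;> decide
  have t93 : f (Nat.toPNat' 93) = 1 := by
    rw [show (Nat.toPNat' 93 : ℕ+) = Nat.toPNat' 3 * Nat.toPNat' 31 from rfl, hf, t3, t31] <;> decide
  have t95 : f (Nat.toPNat' 95) = 1 := by
    rw [show (Nat.toPNat' 95 : ℕ+) = Nat.toPNat' 5 * Nat.toPNat' 19 from rfl, hf, t5, t19] <;> decide
  have t96 : f (Nat.toPNat' 96) = 1 := by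
    rw [show (Nat.toPNat' 96 : ℕ+) = Nat.toPNat' 2 * Nat.toPNat' 48 from rfl, hf, t2, t48] <;> decide
  have t98 : f (Nat.toPNat' 98) = 0 := by
    rw [show (Nat.toPNat' 98 : ℕ+) = Nat.toPNat' 2 * Nat.toPNat' 49 from rfl, hf, t2, t49] <;> decide
  have t99 : f (Nat.toPNat' 99) = 1 := by
    rw [show (Nat.toPNat' 99 : ℕ+) = Nat.toPNat' 3 * Nat.toPNat' 33 from rfl, hf, t3, t33] <;> decide
  have t100 : f (Nat.toPNat' 100) = 0 := by
    rw [show (Nat.toPNat' 100 : ℕ+) = Nat.toPNat' 2 * Nat.toPNat' 50 from rfl, hf, t2, t50] <;> decide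
  have t101 : f (Nat.toPNat' 101) = 1 := by
    have e := h1 26 (by decide)
    rwa [show (26:ℕ)-1 = 25 from rfl, nthp25] at e
  have t102 : f (Nat.toPNat' 102) = 0 := by
    rw [show (Nat.toPNat' 102 : ℕ+) = Nat.toPNat' 2 * Nat.toPNat' 51 from rfl, hf, t2, t51] <;> decide
  have t104 : f (Nat.toPNat' 104) = 1 := by
    rw [show (Nat.toPNat' 104 : ℕ+) = Nat.toPNat' 2 * Nat.toPNat' 52 from rfl, hf, t2, t52] <;> decide
  have t105 : f (Nat.toPNat' 105) = 0 := by
    rw [show (Nat.toPNat' 105 : ℕ+) = Nat.toPNat' 3 * Nat.toPNat' 35 from rfl, hf, t3, t35] <;> decide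
  have t108 : f (Nat.toPNat' 108) = 1 := by
    rw [show (Nat.toPNat' 108 : ℕ+) = Nat.toPNat' 2 * Nat.toPNat' 54 from rfl, hf, t2, t54] <;> decide
  have t110 : f (Nat.toPNat' 110) = 1 := by
    rw [show (Nat.toPNat' 110 : ℕ+) = Nat.toPNat' 2 * Nat.toPNat' 55 from rfl, hf, t2, t55] <;> decide
  have t111 : f (Nat.toPNat' 111) = 1 := by
    rw [show (Nat.toPNat' 111 : ℕ+) = Nat.toPNat' 3 * Nat.toPNat' 37 from rfl, hf, t3, t37] <;> decide
  have t112 : f (Nat.toPNat' 112) = 1 := by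
    rw [show (Nat.toPNat' 112 : ℕ+) = Nat.toPNat' 2 * Nat.toPNat' 56 from rfl, hf, t2, t56] <;> decide
  have t113 : f (Nat.toPNat' 113) = 0 := by
    have e := h0 30 (by decide)
    rwa [show (30:ℕ)-1 = 29 from rfl, nthp29] at e
  have t114 : f (Nat.toPNat' 114) = 0 := by
    rw [show (Nat.toPNat' 114 : ℕ+) = Nat.toPNat' 2 * Nat.toPNat' 57 from rfl, hf, t2, t57] <;> decide
  have t115 : f (Nat.toPNat' 115) = 0 := by
    rw [show (Nat.toPNat' 115 : ℕ+) = Nat.toPNat' 5 * Nat.toPNat' 23 from rfl, hf, t5, t23] <;> decide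
  have t116 : f (Nat.toPNat' 116) = 1 := by
    rw [show (Nat.toPNat' 116 : ℕ+) = Nat.toPNat' 2 * Nat.toPNat' 58 from rfl, hf, t2, t58] <;> decide
  have t117 : f (Nat.toPNat' 117) = 1 := by
    rw [show (Nat.toPNat' 117 : ℕ+) = Nat.toPNat' 3 * Nat.toPNat' 39 from rfl, hf, t3, t39] <;> decide
  have t119 : f (Nat.toPNat' 119) = 0 := by
    rw [show (Nat.toPNat' 119 : ℕ+) = Nat.toPNat' 7 * Nat.toPNat' 17 from rfl, hf, t7, t17] <;> decide
  have t120 : f (Nat.toPNat' 120) = 1 := by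
    rw [show (Nat.toPNat' 120 : ℕ+) = Nat.toPNat' 2 * Nat.toPNat' 60 from rfl, hf, t2, t60] <;> decide
  have t122 : f (Nat.toPNat' 122) = 0 := by
    rw [show (Nat.toPNat' 122 : ℕ+) = Nat.toPNat' 2 * Nat.toPNat' 61 from rfl, hf, t2, t61] <;> decide
  have t123 : f (Nat.toPNat' 123) = 0 := by
    rw [show (Nat.toPNat' 123 : ℕ+) = Nat.toPNat' 3 * Nat.toPNat' 41 from rfl, hf, t3, t41] <;> decide
  have t125 : f (Nat.toPNat' 125) = 0 := by
    rw [show (Nat.toPNat' 125 : ℕ+) = Nat.toPNat' 5 * Nat.toPNat' 25 from rfl, hf, t5, t25] <;> decide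
  have t126 : f (Nat.toPNat' 126) = 1 := by
    rw [show (Nat.toPNat' 126 : ℕ+) = Nat.toPNat' 2 * Nat.toPNat' 63 from rfl, hf, t2, t63] <;> decide
  have t128 : f (Nat.toPNat' 128) = 0 := by
    rw [show (Nat.toPNat' 128 : ℕ+) = Nat.toPNat' 2 * Nat.toPNat' 64 from rfl, hf, t2, t64] <;> decide
  have t130 : f (Nat.toPNat' 130) = 1 := by
    rw [show (Nat.toPNat' 130 : ℕ+) = Nat.toPNat' 2 * Nat.toPNat' 65 from rfl, hf, t2, t65] <;> decide
  have t132 : f (Nat.toPNat' 132) = 0 := by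
    rw [show (Nat.toPNat' 132 : ℕ+) = Nat.toPNat' 2 * Nat.toPNat' 66 from rfl, hf, t2, t66] <;> decide
  have t133 : f (Nat.toPNat' 133) = 0 := by
    rw [show (Nat.toPNat' 133 : ℕ+) = Nat.toPNat' 7 * Nat.toPNat' 19 from rfl, hf, t7, t19] <;> decide
  have t135 : f (Nat.toPNat' 135) = 1 := by
    rw [show (Nat.toPNat' 135 : ℕ+) = Nat.toPNat' 3 * Nat.toPNat' 45 from rfl, hf, t3, t45] <;> decide
  have t136 : f (Nat.toPNat' 136) = 1 := by
    rw [show (Nat.toPNat' 136 : ℕ+) = Nat.toPNat' 2 * Nat.toPNat' 68 from rfl, hf, t2, t68] <;> decide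
  have t140 : f (Nat.toPNat' 140) = 1 := by
    rw [show (Nat.toPNat' 140 : ℕ+) = Nat.toPNat' 2 * Nat.toPNat' 70 from rfl, hf, t2, t70] <;> decide
  have t143 : f (Nat.toPNat' 143) = 0 := by
    rw [show (Nat.toPNat' 143 : ℕ+) = Nat.toPNat' 11 * Nat.toPNat' 13 from rfl, hf, t11, t13] <;> decide
  have t144 : f (Nat.toPNat' 144) = 0 := by
    rw [show (Nat.toPNat' 144 : ℕ+) = Nat.toPNat' 2 * Nat.toPNat' 72 from rfl, hf, t2, t72] <;> decide
  have t145 : f (Nat.toPNat' 145) = 1 := by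
    rw [show (Nat.toPNat' 145 : ℕ+) = Nat.toPNat' 5 * Nat.toPNat' 29 from rfl, hf, t5, t29] <;> decide
  have t146 : f (Nat.toPNat' 146) = 0 := by
    rw [show (Nat.toPNat' 146 : ℕ+) = Nat.toPNat' 2 * Nat.toPNat' 73 from rfl, hf, t2, t73] <;> decide
  have t147 : f (Nat.toPNat' 147) = 1 := by
    rw [show (Nat.toPNat' 147 : ℕ+) = Nat.toPNat' 3 * Nat.toPNat' 49 from rfl, hf, t3, t49] <;> decide
  have t148 : f (Nat.toPNat' 148) = 0 := by
    rw [show (Nat.toPNat' 148 : ℕ+) = Nat.toPNat' 2 * Nat.toPNat' 74 from rfl, hf, t2, t74] <;> decide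
  have t150 : f (Nat.toPNat' 150) = 1 := by
    rw [show (Nat.toPNat' 150 : ℕ+) = Nat.toPNat' 2 * Nat.toPNat' 75 from rfl, hf, t2, t75] <;> decide
  have t152 : f (Nat.toPNat' 152) = 1 := by
    rw [show (Nat.toPNat' 152 : ℕ+) = Nat.toPNat' 2 * Nat.toPNat' 76 from rfl, hf, t2, t76] <;> decide
  have t153 : f (Nat.toPNat' 153) = 1 := by
    rw [show (Nat.toPNat' 153 : ℕ+) = Nat.toPNat' 3 * Nat.toPNat' 51 from rfl, hf, t3, t51] <;> decide
  have t154 : f (Nat.toPNat' 154) = 0 := by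
    rw [show (Nat.toPNat' 154 : ℕ+) = Nat.toPNat' 2 * Nat.toPNat' 77 from rfl, hf, t2, t77] <;> decide
  have t155 : f (Nat.toPNat' 155) = 0 := by
    rw [show (Nat.toPNat' 155 : ℕ+) = Nat.toPNat' 5 * Nat.toPNat' 31 from rfl, hf, t5, t31] <;> decide
  have t156 : f (Nat.toPNat' 156) = 0 := by
    rw [show (Nat.toPNat' 156 : ℕ+) = Nat.toPNat' 2 * Nat.toPNat' 78 from rfl, hf, t2, t78] <;> decide
  have t160 : f (Nat.toPNat' 160) = 0 := by
    rw [show (Nat.toPNat' 160 : ℕ+) = Nat.toPNat' 2 * Nat.toPNat' 80 from rfl, hf, t2, t80] <;> decide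
  have t161 : f (Nat.toPNat' 161) = 1 := by
    rw [show (Nat.toPNat' 161 : ℕ+) = Nat.toPNat' 7 * Nat.toPNat' 23 from rfl, hf, t7, t23] <;> decide
  have t162 : f (Nat.toPNat' 162) = 0 := by
    rw [show (Nat.toPNat' 162 : ℕ+) = Nat.toPNat' 2 * Nat.toPNat' 81 from rfl, hf, t2, t81] <;> decide
  have t164 : f (Nat.toPNat' 164) = 1 := by
    rw [show (Nat.toPNat' 164 : ℕ+) = Nat.toPNat' 2 * Nat.toPNat' 82 from rfl, hf, t2, t82] <;> decide
  have t165 : f (Nat.toPNat' 165) = 0 := by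
    rw [show (Nat.toPNat' 165 : ℕ+) = Nat.toPNat' 3 * Nat.toPNat' 55 from rfl, hf, t3, t55] <;> decide
  have t168 : f (Nat.toPNat' 168) = 0 := by
    rw [show (Nat.toPNat' 168 : ℕ+) = Nat.toPNat' 2 * Nat.toPNat' 84 from rfl, hf, t2, t84] <;> decide
  have t170 : f (Nat.toPNat' 170) = 1 := by
    rw [show (Nat.toPNat' 170 : ℕ+) = Nat.toPNat' 2 * Nat.toPNat' 85 from rfl, hf, t2, t85] <;> decide
  have t171 : f (Nat.toPNat' 171) = 1 := by
    rw [show (Nat.toPNat' 171 : ℕ+) = Nat.toPNat' 3 * Nat.toPNat' 57 from rfl, hf, t3, t57] <;> decide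
  have t175 : f (Nat.toPNat' 175) = 1 := by
    rw [show (Nat.toPNat' 175 : ℕ+) = Nat.toPNat' 5 * Nat.toPNat' 35 from rfl, hf, t5, t35] <;> decide
  have t176 : f (Nat.toPNat' 176) = 1 := by
    rw [show (Nat.toPNat' 176 : ℕ+) = Nat.toPNat' 2 * Nat.toPNat' 88 from rfl, hf, t2, t88] <;> decide
  have t178 : f (Nat.toPNat' 178) = 1 := by
    rw [show (Nat.toPNat' 178 : ℕ+) = Nat.toPNat' 2 * Nat.toPNat' 89 from rfl, hf, t2, t89] <;> decide
  have t180 : f (Nat.toPNat' 180) = 0 := by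
    rw [show (Nat.toPNat' 180 : ℕ+) = Nat.toPNat' 2 * Nat.toPNat' 90 from rfl, hf, t2, t90] <;> decide
  have t182 : f (Nat.toPNat' 182) = 0 := by
    rw [show (Nat.toPNat' 182 : ℕ+) = Nat.toPNat' 2 * Nat.toPNat' 91 from rfl, hf, t2, t91] <;> decide
  have t185 : f (Nat.toPNat' 185) = 0 := by
    rw [show (Nat.toPNat' 185 : ℕ+) = Nat.toPNat' 5 * Nat.toPNat' 37 from rfl, hf, t5, t37] <;> decide
  have t187 : f (Nat.toPNat' 187) = 0 := by
    rw [show (Nat.toPNat' 187 : ℕ+) = Nat.toPNat' 11 * Nat.toPNat' 17 from rfl, hf, t11, t17] <;> decide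
  have t189 : f (Nat.toPNat' 189) = 0 := by
    rw [show (Nat.toPNat' 189 : ℕ+) = Nat.toPNat' 3 * Nat.toPNat' 63 from rfl, hf, t3, t63] <;> decide
  have t190 : f (Nat.toPNat' 190) = 1 := by
    rw [show (Nat.toPNat' 190 : ℕ+) = Nat.toPNat' 2 * Nat.toPNat' 95 from rfl, hf, t2, t95] <;> decide
  have t192 : f (Nat.toPNat' 192) = 1 := by
    rw [show (Nat.toPNat' 192 : ℕ+) = Nat.toPNat' 2 * Nat.toPNat' 96 from rfl, hf, t2, t96] <;> decide
  have t195 : f (Nat.toPNat' 195) = 0 := by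
    rw [show (Nat.toPNat' 195 : ℕ+) = Nat.toPNat' 3 * Nat.toPNat' 65 from rfl, hf, t3, t65] <;> decide
  have t196 : f (Nat.toPNat' 196) = 0 := by
    rw [show (Nat.toPNat' 196 : ℕ+) = Nat.toPNat' 2 * Nat.toPNat' 98 from rfl, hf, t2, t98] <;> decide
  have t198 : f (Nat.toPNat' 198) = 1 := by
    rw [show (Nat.toPNat' 198 : ℕ+) = Nat.toPNat' 2 * Nat.toPNat' 99 from rfl, hf, t2, t99] <;> decide
  have t200 : f (Nat.toPNat' 200) = 0 := by
    rw [show (Nat.toPNat' 200 : ℕ+) = Nat.toPNat' 2 * Nat.toPNat' 100 from rfl, hf, t2, t100] <;> decide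
  have t203 : f (Nat.toPNat' 203) = 0 := by
    rw [show (Nat.toPNat' 203 : ℕ+) = Nat.toPNat' 7 * Nat.toPNat' 29 from rfl, hf, t7, t29] <;> decide
  have t204 : f (Nat.toPNat' 204) = 0 := by
    rw [show (Nat.toPNat' 204 : ℕ+) = Nat.toPNat' 2 * Nat.toPNat' 102 from rfl, hf, t2, t102] <;> decide
  have t205 : f (Nat.toPNat' 205) = 1 := by
    rw [show (Nat.toPNat' 205 : ℕ+) = Nat.toPNat' 5 * Nat.toPNat' 41 from rfl, hf, t5, t41] <;> decide
  have t207 : f (Nat.toPNat' 207) = 0 := by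
    rw [show (Nat.toPNat' 207 : ℕ+) = Nat.toPNat' 3 * Nat.toPNat' 69 from rfl, hf, t3, t69] <;> decide
  have t208 : f (Nat.toPNat' 208) = 1 := by
    rw [show (Nat.toPNat' 208 : ℕ+) = Nat.toPNat' 2 * Nat.toPNat' 104 from rfl, hf, t2, t104] <;> decide
  have t209 : f (Nat.toPNat' 209) = 0 := by
    rw [show (Nat.toPNat' 209 : ℕ+) = Nat.toPNat' 11 * Nat.toPNat' 19 from rfl, hf, t11, t19] <;> decide
  have t210 : f (Nat.toPNat' 210) = 0 := by
    rw [show (Nat.toPNat' 210 : ℕ+) = Nat.toPNat' 2 * Nat.toPNat' 105 from rfl, hf, t2, t105] <;> decide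
  have t216 : f (Nat.toPNat' 216) = 1 := by
    rw [show (Nat.toPNat' 216 : ℕ+) = Nat.toPNat' 2 * Nat.toPNat' 108 from rfl, hf, t2, t108] <;> decide
  have t217 : f (Nat.toPNat' 217) = 1 := by
    rw [show (Nat.toPNat' 217 : ℕ+) = Nat.toPNat' 7 * Nat.toPNat' 31 from rfl, hf, t7, t31] <;> decide
  have t220 : f (Nat.toPNat' 220) = 1 := by
    rw [show (Nat.toPNat' 220 : ℕ+) = Nat.toPNat' 2 * Nat.toPNat' 110 from rfl, hf, t2, t110] <;> decide
  have t221 : f (Nat.toPNat' 221) = 0 := by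
    rw [show (Nat.toPNat' 221 : ℕ+) = Nat.toPNat' 13 * Nat.toPNat' 17 from rfl, hf, t13, t17] <;> decide
  have t224 : f (Nat.toPNat' 224) = 1 := by
    rw [show (Nat.toPNat' 224 : ℕ+) = Nat.toPNat' 2 * Nat.toPNat' 112 from rfl, hf, t2, t112] <;> decide
  have t225 : f (Nat.toPNat' 225) = 0 := by
    rw [show (Nat.toPNat' 225 : ℕ+) = Nat.toPNat' 3 * Nat.toPNat' 75 from rfl, hf, t3, t75] <;> decide
  have t226 : f (Nat.toPNat' 226) = 0 := by
    rw [show (Nat.toPNat' 226 : ℕ+) = Nat.toPNat' 2 * Nat.toPNat' 113 from rfl, hf, t2, t113] <;> decide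
  have t228 : f (Nat.toPNat' 228) = 0 := by
    rw [show (Nat.toPNat' 228 : ℕ+) = Nat.toPNat' 2 * Nat.toPNat' 114 from rfl, hf, t2, t114] <;> decide
  have t231 : f (Nat.toPNat' 231) = 1 := by
    rw [show (Nat.toPNat' 231 : ℕ+) = Nat.toPNat' 3 * Nat.toPNat' 77 from rfl, hf, t3, t77] <;> decide
  have t232 : f (Nat.toPNat' 232) = 1 := by
    rw [show (Nat.toPNat' 232 : ℕ+) = Nat.toPNat' 2 * Nat.toPNat' 116 from rfl, hf, t2, t116] <;> decide
  have t234 : f (Nat.toPNat' 234) = 1 := by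
    rw [show (Nat.toPNat' 234 : ℕ+) = Nat.toPNat' 2 * Nat.toPNat' 117 from rfl, hf, t2, t117] <;> decide
  have t238 : f (Nat.toPNat' 238) = 0 := by
    rw [show (Nat.toPNat' 238 : ℕ+) = Nat.toPNat' 2 * Nat.toPNat' 119 from rfl, hf, t2, t119] <;> decide
  have t240 : f (Nat.toPNat' 240) = 1 := by
    rw [show (Nat.toPNat' 240 : ℕ+) = Nat.toPNat' 2 * Nat.toPNat' 120 from rfl, hf, t2, t120] <;> decide
  have t243 : f (Nat.toPNat' 243) = 1 := by
    rw [show (Nat.toPNat' 243 : ℕ+) = Nat.toPNat' 3 * Nat.toPNat' 81 from rfl, hf, t3, t81] <;> decide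
  have t244 : f (Nat.toPNat' 244) = 0 := by
    rw [show (Nat.toPNat' 244 : ℕ+) = Nat.toPNat' 2 * Nat.toPNat' 122 from rfl, hf, t2, t122] <;> decide
  have t247 : f (Nat.toPNat' 247) = 0 := by
    rw [show (Nat.toPNat' 247 : ℕ+) = Nat.toPNat' 13 * Nat.toPNat' 19 from rfl, hf, t13, t19] <;> decide
  have t250 : f (Nat.toPNat' 250) = 0 := by
    rw [show (Nat.toPNat' 250 : ℕ+) = Nat.toPNat' 2 * Nat.toPNat' 125 from rfl, hf, t2, t125] <;> decide
  have t252 : f (Nat.toPNat' 252) = 1 := by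
    rw [show (Nat.toPNat' 252 : ℕ+) = Nat.toPNat' 2 * Nat.toPNat' 126 from rfl, hf, t2, t126] <;> decide
  have t253 : f (Nat.toPNat' 253) = 1 := by
    rw [show (Nat.toPNat' 253 : ℕ+) = Nat.toPNat' 11 * Nat.toPNat' 23 from rfl, hf, t11, t23] <;> decide
  have t255 : f (Nat.toPNat' 255) = 0 := by
    rw [show (Nat.toPNat' 255 : ℕ+) = Nat.toPNat' 3 * Nat.toPNat' 85 from rfl, hf, t3, t85] <;> decide
  have t256 : f (Nat.toPNat' 256) = 0 := by
    rw [show (Nat.toPNat' 256 : ℕ+) = Nat.toPNat' 2 * Nat.toPNat' 128 from rfl, hf, t2, t128] <;> decide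
  have t257 : f (Nat.toPNat' 257) = 1 := by
    have e := h1 55 (by decide)
    rwa [show (55:ℕ)-1 = 54 from rfl, nthp54] at e
  have t260 : f (Nat.toPNat' 260) = 1 := by
    rw [show (Nat.toPNat' 260 : ℕ+) = Nat.toPNat' 2 * Nat.toPNat' 130 from rfl, hf, t2, t130] <;> decide
  have t261 : f (Nat.toPNat' 261) = 1 := by
    rw [show (Nat.toPNat' 261 : ℕ+) = Nat.toPNat' 3 * Nat.toPNat' 87 from rfl, hf, t3, t87] <;> decide
  have t264 : f (Nat.toPNat' 264) = 0 := by
    rw [show (Nat.toPNat' 264 : ℕ+) = Nat.toPNat' 2 * Nat.toPNat' 132 from rfl, hf, t2, t132] <;> decide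
  have t265 : f (Nat.toPNat' 265) = 1 := by
    rw [show (Nat.toPNat' 265 : ℕ+) = Nat.toPNat' 5 * Nat.toPNat' 53 from rfl, hf, t5, t53] <;> decide
  have t266 : f (Nat.toPNat' 266) = 0 := by
    rw [show (Nat.toPNat' 266 : ℕ+) = Nat.toPNat' 2 * Nat.toPNat' 133 from rfl, hf, t2, t133] <;> decide
  have t269 : f (Nat.toPNat' 269) = 0 := by
    have e := h0 57 (by decide)
    rwa [show (57:ℕ)-1 = 56 from rfl, nthp56] at e
  have t270 : f (Nat.toPNat' 270) = 1 := by
    rw [show (Nat.toPNat' 270 : ℕ+) = Nat.toPNat' 2 * Nat.toPNat' 135 from rfl, hf, t2, t135] <;> decide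
  have t272 : f (Nat.toPNat' 272) = 1 := by
    rw [show (Nat.toPNat' 272 : ℕ+) = Nat.toPNat' 2 * Nat.toPNat' 136 from rfl, hf, t2, t136] <;> decide
  have t273 : f (Nat.toPNat' 273) = 1 := by
    rw [show (Nat.toPNat' 273 : ℕ+) = Nat.toPNat' 3 * Nat.toPNat' 91 from rfl, hf, t3, t91] <;> decide
  have t275 : f (Nat.toPNat' 275) = 1 := by
    rw [show (Nat.toPNat' 275 : ℕ+) = Nat.toPNat' 5 * Nat.toPNat' 55 from rfl, hf, t5, t55] <;> decide
  have t279 : f (Nat.toPNat' 279) = 0 := by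
    rw [show (Nat.toPNat' 279 : ℕ+) = Nat.toPNat' 3 * Nat.toPNat' 93 from rfl, hf, t3, t93] <;> decide
  have t280 : f (Nat.toPNat' 280) = 1 := by
    rw [show (Nat.toPNat' 280 : ℕ+) = Nat.toPNat' 2 * Nat.toPNat' 140 from rfl, hf, t2, t140] <;> decide
  have t285 : f (Nat.toPNat' 285) = 0 := by
    rw [show (Nat.toPNat' 285 : ℕ+) = Nat.toPNat' 3 * Nat.toPNat' 95 from rfl, hf, t3, t95] <;> decide
  have t286 : f (Nat.toPNat' 286) = 0 := by
    rw [show (Nat.toPNat' 286 : ℕ+) = Nat.toPNat' 2 * Nat.toPNat' 143 from rfl, hf, t2, t143] <;> decide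
  have t288 : f (Nat.toPNat' 288) = 0 := by
    rw [show (Nat.toPNat' 288 : ℕ+) = Nat.toPNat' 2 * Nat.toPNat' 144 from rfl, hf, t2, t144] <;> decide
  have t289 : f (Nat.toPNat' 289) = 0 := by
    rw [show (Nat.toPNat' 289 : ℕ+) = Nat.toPNat' 17 * Nat.toPNat' 17 from rfl, hf, t17] <;> decide
  have t292 : f (Nat.toPNat' 292) = 0 := by
    rw [show (Nat.toPNat' 292 : ℕ+) = Nat.toPNat' 2 * Nat.toPNat' 146 from rfl, hf, t2, t146] <;> decide
  have t294 : f (Nat.toPNat' 294) = 1 := by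
    rw [show (Nat.toPNat' 294 : ℕ+) = Nat.toPNat' 2 * Nat.toPNat' 147 from rfl, hf, t2, t147] <;> decide
  have t296 : f (Nat.toPNat' 296) = 0 := by
    rw [show (Nat.toPNat' 296 : ℕ+) = Nat.toPNat' 2 * Nat.toPNat' 148 from rfl, hf, t2, t148] <;> decide
  have t297 : f (Nat.toPNat' 297) = 0 := by
    rw [show (Nat.toPNat' 297 : ℕ+) = Nat.toPNat' 3 * Nat.toPNat' 99 from rfl, hf, t3, t99] <;> decide
  have t299 : f (Nat.toPNat' 299) = 1 := by
    rw [show (Nat.toPNat' 299 : ℕ+) = Nat.toPNat' 13 * Nat.toPNat' 23 from rfl, hf, t13, t23] <;> decide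
  have t300 : f (Nat.toPNat' 300) = 1 := by
    rw [show (Nat.toPNat' 300 : ℕ+) = Nat.toPNat' 2 * Nat.toPNat' 150 from rfl, hf, t2, t150] <;> decide
  have t304 : f (Nat.toPNat' 304) = 1 := by
    rw [show (Nat.toPNat' 304 : ℕ+) = Nat.toPNat' 2 * Nat.toPNat' 152 from rfl, hf, t2, t152] <;> decide
  have t305 : f (Nat.toPNat' 305) = 0 := by
    rw [show (Nat.toPNat' 305 : ℕ+) = Nat.toPNat' 5 * Nat.toPNat' 61 from rfl, hf, t5, t61] <;> decide
  have t306 : f (Nat.toPNat' 306) = 1 := by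
    rw [show (Nat.toPNat' 306 : ℕ+) = Nat.toPNat' 2 * Nat.toPNat' 153 from rfl, hf, t2, t153] <;> decide
  have t308 : f (Nat.toPNat' 308) = 0 := by
    rw [show (Nat.toPNat' 308 : ℕ+) = Nat.toPNat' 2 * Nat.toPNat' 154 from rfl, hf, t2, t154] <;> decide
  have t312 : f (Nat.toPNat' 312) = 0 := by
    rw [show (Nat.toPNat' 312 : ℕ+) = Nat.toPNat' 2 * Nat.toPNat' 156 from rfl, hf, t2, t156] <;> decide
  have t313 : f (Nat.toPNat' 313) = 1 := by
    have e := h1 65 (by decide)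
    rwa [show (65:ℕ)-1 = 64 from rfl, nthp64] at e
  have t315 : f (Nat.toPNat' 315) = 1 := by
    rw [show (Nat.toPNat' 315 : ℕ+) = Nat.toPNat' 3 * Nat.toPNat' 105 from rfl, hf, t3, t105] <;> decide
  have t319 : f (Nat.toPNat' 319) = 0 := by
    rw [show (Nat.toPNat' 319 : ℕ+) = Nat.toPNat' 11 * Nat.toPNat' 29 from rfl, hf, t11, t29] <;> decide
  have t320 : f (Nat.toPNat' 320) = 0 := by
    rw [show (Nat.toPNat' 320 : ℕ+) = Nat.toPNat' 2 * Nat.toPNat' 160 from rfl, hf, t2, t160] <;> decide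
  have t323 : f (Nat.toPNat' 323) = 0 := by
    rw [show (Nat.toPNat' 323 : ℕ+) = Nat.toPNat' 17 * Nat.toPNat' 19 from rfl, hf, t17, t19] <;> decide
  have t324 : f (Nat.toPNat' 324) = 0 := by
    rw [show (Nat.toPNat' 324 : ℕ+) = Nat.toPNat' 2 * Nat.toPNat' 162 from rfl, hf, t2, t162] <;> decide
  have t325 : f (Nat.toPNat' 325) = 1 := by
    rw [show (Nat.toPNat' 325 : ℕ+) = Nat.toPNat' 5 * Nat.toPNat' 65 from rfl, hf, t5, t65] <;> decide
  have t328 : f (Nat.toPNat' 328) = 1 := by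
    rw [show (Nat.toPNat' 328 : ℕ+) = Nat.toPNat' 2 * Nat.toPNat' 164 from rfl, hf, t2, t164] <;> decide
  have t330 : f (Nat.toPNat' 330) = 0 := by
    rw [show (Nat.toPNat' 330 : ℕ+) = Nat.toPNat' 2 * Nat.toPNat' 165 from rfl, hf, t2, t165] <;> decide
  have t333 : f (Nat.toPNat' 333) = 0 := by
    rw [show (Nat.toPNat' 333 : ℕ+) = Nat.toPNat' 3 * Nat.toPNat' 111 from rfl, hf, t3, t111] <;> decide
  have t336 : f (Nat.toPNat' 336) = 0 := by
    rw [show (Nat.toPNat' 336 : ℕ+) = Nat.toPNat' 2 * Nat.toPNat' 168 from rfl, hf, t2, t168] <;> decide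
  have t340 : f (Nat.toPNat' 340) = 1 := by
    rw [show (Nat.toPNat' 340 : ℕ+) = Nat.toPNat' 2 * Nat.toPNat' 170 from rfl, hf, t2, t170] <;> decide
  have t342 : f (Nat.toPNat' 342) = 1 := by
    rw [show (Nat.toPNat' 342 : ℕ+) = Nat.toPNat' 2 * Nat.toPNat' 171 from rfl, hf, t2, t171] <;> decide
  have t345 : f (Nat.toPNat' 345) = 1 := by
    rw [show (Nat.toPNat' 345 : ℕ+) = Nat.toPNat' 3 * Nat.toPNat' 115 from rfl, hf, t3, t115] <;> decide
  have t351 : f (Nat.toPNat' 351) = 0 := by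
    rw [show (Nat.toPNat' 351 : ℕ+) = Nat.toPNat' 3 * Nat.toPNat' 117 from rfl, hf, t3, t117] <;> decide
  have t352 : f (Nat.toPNat' 352) = 1 := by
    rw [show (Nat.toPNat' 352 : ℕ+) = Nat.toPNat' 2 * Nat.toPNat' 176 from rfl, hf, t2, t176] <;> decide
  have t356 : f (Nat.toPNat' 356) = 1 := by
    rw [show (Nat.toPNat' 356 : ℕ+) = Nat.toPNat' 2 * Nat.toPNat' 178 from rfl, hf, t2, t178] <;> decide
  have t357 : f (Nat.toPNat' 357) = 1 := by
    rw [show (Nat.toPNat' 357 : ℕ+) = Nat.toPNat' 3 * Nat.toPNat' 119 from rfl, hf, t3, t119] <;> decide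
  have t360 : f (Nat.toPNat' 360) = 0 := by
    rw [show (Nat.toPNat' 360 : ℕ+) = Nat.toPNat' 2 * Nat.toPNat' 180 from rfl, hf, t2, t180] <;> decide
  have t364 : f (Nat.toPNat' 364) = 0 := by
    rw [show (Nat.toPNat' 364 : ℕ+) = Nat.toPNat' 2 * Nat.toPNat' 182 from rfl, hf, t2, t182] <;> decide
  have t365 : f (Nat.toPNat' 365) = 0 := by
    rw [show (Nat.toPNat' 365 : ℕ+) = Nat.toPNat' 5 * Nat.toPNat' 73 from rfl, hf, t5, t73] <;> decide
  have t369 : f (Nat.toPNat' 369) = 1 := by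
    rw [show (Nat.toPNat' 369 : ℕ+) = Nat.toPNat' 3 * Nat.toPNat' 123 from rfl, hf, t3, t123] <;> decide
  have t370 : f (Nat.toPNat' 370) = 0 := by
    rw [show (Nat.toPNat' 370 : ℕ+) = Nat.toPNat' 2 * Nat.toPNat' 185 from rfl, hf, t2, t185] <;> decide
  have t373 : f (Nat.toPNat' 373) = 0 := by
    have e := h0 74 (by decide)
    rwa [show (74:ℕ)-1 = 73 from rfl, nthp73] at e
  have t374 : f (Nat.toPNat' 374) = 0 := by
    rw [show (Nat.toPNat' 374 : ℕ+) = Nat.toPNat' 2 * Nat.toPNat' 187 from rfl, hf, t2, t187] <;> decide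
  have t375 : f (Nat.toPNat' 375) = 1 := by
    rw [show (Nat.toPNat' 375 : ℕ+) = Nat.toPNat' 3 * Nat.toPNat' 125 from rfl, hf, t3, t125] <;> decide
  have t377 : f (Nat.toPNat' 377) = 0 := by
    rw [show (Nat.toPNat' 377 : ℕ+) = Nat.toPNat' 13 * Nat.toPNat' 29 from rfl, hf, t13, t29] <;> decide
  have t378 : f (Nat.toPNat' 378) = 0 := by
    rw [show (Nat.toPNat' 378 : ℕ+) = Nat.toPNat' 2 * Nat.toPNat' 189 from rfl, hf, t2, t189] <;> decide
  have t380 : f (Nat.toPNat' 380) = 1 := by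
    rw [show (Nat.toPNat' 380 : ℕ+) = Nat.toPNat' 2 * Nat.toPNat' 190 from rfl, hf, t2, t190] <;> decide
  have t384 : f (Nat.toPNat' 384) = 1 := by
    rw [show (Nat.toPNat' 384 : ℕ+) = Nat.toPNat' 2 * Nat.toPNat' 192 from rfl, hf, t2, t192] <;> decide
  have t390 : f (Nat.toPNat' 390) = 0 := by
    rw [show (Nat.toPNat' 390 : ℕ+) = Nat.toPNat' 2 * Nat.toPNat' 195 from rfl, hf, t2, t195] <;> decide
  have t391 : f (Nat.toPNat' 391) = 1 := by
    rw [show (Nat.toPNat' 391 : ℕ+) = Nat.toPNat' 17 * Nat.toPNat' 23 from rfl, hf, t17, t23] <;> decide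
  have t392 : f (Nat.toPNat' 392) = 0 := by
    rw [show (Nat.toPNat' 392 : ℕ+) = Nat.toPNat' 2 * Nat.toPNat' 196 from rfl, hf, t2, t196] <;> decide
  have t396 : f (Nat.toPNat' 396) = 1 := by
    rw [show (Nat.toPNat' 396 : ℕ+) = Nat.toPNat' 2 * Nat.toPNat' 198 from rfl, hf, t2, t198] <;> decide
  have t399 : f (Nat.toPNat' 399) = 1 := by
    rw [show (Nat.toPNat' 399 : ℕ+) = Nat.toPNat' 3 * Nat.toPNat' 133 from rfl, hf, t3, t133] <;> decide
  have t400 : f (Nat.toPNat' 400) = 0 := by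
    rw [show (Nat.toPNat' 400 : ℕ+) = Nat.toPNat' 2 * Nat.toPNat' 200 from rfl, hf, t2, t200] <;> decide
  have t405 : f (Nat.toPNat' 405) = 0 := by
    rw [show (Nat.toPNat' 405 : ℕ+) = Nat.toPNat' 3 * Nat.toPNat' 135 from rfl, hf, t3, t135] <;> decide
  have t408 : f (Nat.toPNat' 408) = 0 := by
    rw [show (Nat.toPNat' 408 : ℕ+) = Nat.toPNat' 2 * Nat.toPNat' 204 from rfl, hf, t2, t204] <;> decide
  have t409 : f (Nat.toPNat' 409) = 0 := by
    have e := h0 80 (by decide)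
    rwa [show (80:ℕ)-1 = 79 from rfl, nthp79] at e
  have t410 : f (Nat.toPNat' 410) = 1 := by
    rw [show (Nat.toPNat' 410 : ℕ+) = Nat.toPNat' 2 * Nat.toPNat' 205 from rfl, hf, t2, t205] <;> decide
  have t416 : f (Nat.toPNat' 416) = 1 := by
    rw [show (Nat.toPNat' 416 : ℕ+) = Nat.toPNat' 2 * Nat.toPNat' 208 from rfl, hf, t2, t208] <;> decide
  have t418 : f (Nat.toPNat' 418) = 0 := by
    rw [show (Nat.toPNat' 418 : ℕ+) = Nat.toPNat' 2 * Nat.toPNat' 209 from rfl, hf, t2, t209] <;> decide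
  have t420 : f (Nat.toPNat' 420) = 0 := by
    rw [show (Nat.toPNat' 420 : ℕ+) = Nat.toPNat' 2 * Nat.toPNat' 210 from rfl, hf, t2, t210] <;> decide
  have t425 : f (Nat.toPNat' 425) = 1 := by
    rw [show (Nat.toPNat' 425 : ℕ+) = Nat.toPNat' 5 * Nat.toPNat' 85 from rfl, hf, t5, t85] <;> decide
  have t432 : f (Nat.toPNat' 432) = 1 := by
    rw [show (Nat.toPNat' 432 : ℕ+) = Nat.toPNat' 2 * Nat.toPNat' 216 from rfl, hf, t2, t216] <;> decide
  have t437 : f (Nat.toPNat' 437) = 1 := by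
    rw [show (Nat.toPNat' 437 : ℕ+) = Nat.toPNat' 19 * Nat.toPNat' 23 from rfl, hf, t19, t23] <;> decide
  have t440 : f (Nat.toPNat' 440) = 1 := by
    rw [show (Nat.toPNat' 440 : ℕ+) = Nat.toPNat' 2 * Nat.toPNat' 220 from rfl, hf, t2, t220] <;> decide
  have t442 : f (Nat.toPNat' 442) = 0 := by
    rw [show (Nat.toPNat' 442 : ℕ+) = Nat.toPNat' 2 * Nat.toPNat' 221 from rfl, hf, t2, t221] <;> decide
  have t448 : f (Nat.toPNat' 448) = 1 := by
    rw [show (Nat.toPNat' 448 : ℕ+) = Nat.toPNat' 2 * Nat.toPNat' 224 from rfl, hf, t2, t224] <;> decide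
  have t450 : f (Nat.toPNat' 450) = 0 := by
    rw [show (Nat.toPNat' 450 : ℕ+) = Nat.toPNat' 2 * Nat.toPNat' 225 from rfl, hf, t2, t225] <;> decide
  have t452 : f (Nat.toPNat' 452) = 0 := by
    rw [show (Nat.toPNat' 452 : ℕ+) = Nat.toPNat' 2 * Nat.toPNat' 226 from rfl, hf, t2, t226] <;> decide
  have t456 : f (Nat.toPNat' 456) = 0 := by
    rw [show (Nat.toPNat' 456 : ℕ+) = Nat.toPNat' 2 * Nat.toPNat' 228 from rfl, hf, t2, t228] <;> decide
  have t459 : f (Nat.toPNat' 459) = 0 := by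
    rw [show (Nat.toPNat' 459 : ℕ+) = Nat.toPNat' 3 * Nat.toPNat' 153 from rfl, hf, t3, t153] <;> decide
  have t461 : f (Nat.toPNat' 461) = 0 := by
    have e := h0 89 (by decide)
    rwa [show (89:ℕ)-1 = 88 from rfl, nthp88] at e
  have t464 : f (Nat.toPNat' 464) = 1 := by
    rw [show (Nat.toPNat' 464 : ℕ+) = Nat.toPNat' 2 * Nat.toPNat' 232 from rfl, hf, t2, t232] <;> decide
  have t468 : f (Nat.toPNat' 468) = 1 := by
    rw [show (Nat.toPNat' 468 : ℕ+) = Nat.toPNat' 2 * Nat.toPNat' 234 from rfl, hf, t2, t234] <;> decide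
  have t475 : f (Nat.toPNat' 475) = 1 := by
    rw [show (Nat.toPNat' 475 : ℕ+) = Nat.toPNat' 5 * Nat.toPNat' 95 from rfl, hf, t5, t95] <;> decide
  have t476 : f (Nat.toPNat' 476) = 0 := by
    rw [show (Nat.toPNat' 476 : ℕ+) = Nat.toPNat' 2 * Nat.toPNat' 238 from rfl, hf, t2, t238] <;> decide
  have t480 : f (Nat.toPNat' 480) = 1 := by
    rw [show (Nat.toPNat' 480 : ℕ+) = Nat.toPNat' 2 * Nat.toPNat' 240 from rfl, hf, t2, t240] <;> decide
  have t481 : f (Nat.toPNat' 481) = 1 := by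
    rw [show (Nat.toPNat' 481 : ℕ+) = Nat.toPNat' 13 * Nat.toPNat' 37 from rfl, hf, t13, t37] <;> decide
  have t483 : f (Nat.toPNat' 483) = 0 := by
    rw [show (Nat.toPNat' 483 : ℕ+) = Nat.toPNat' 3 * Nat.toPNat' 161 from rfl, hf, t3, t161] <;> decide
  have t488 : f (Nat.toPNat' 488) = 0 := by
    rw [show (Nat.toPNat' 488 : ℕ+) = Nat.toPNat' 2 * Nat.toPNat' 244 from rfl, hf, t2, t244] <;> decide
  have t494 : f (Nat.toPNat' 494) = 0 := by
    rw [show (Nat.toPNat' 494 : ℕ+) = Nat.toPNat' 2 * Nat.toPNat' 247 from rfl, hf, t2, t247] <;> decide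
  have t500 : f (Nat.toPNat' 500) = 0 := by
    rw [show (Nat.toPNat' 500 : ℕ+) = Nat.toPNat' 2 * Nat.toPNat' 250 from rfl, hf, t2, t250] <;> decide
  have t504 : f (Nat.toPNat' 504) = 1 := by
    rw [show (Nat.toPNat' 504 : ℕ+) = Nat.toPNat' 2 * Nat.toPNat' 252 from rfl, hf, t2, t252] <;> decide
  have t505 : f (Nat.toPNat' 505) = 1 := by
    rw [show (Nat.toPNat' 505 : ℕ+) = Nat.toPNat' 5 * Nat.toPNat' 101 from rfl, hf, t5, t101] <;> decide
  have t510 : f (Nat.toPNat' 510) = 0 := by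
    rw [show (Nat.toPNat' 510 : ℕ+) = Nat.toPNat' 2 * Nat.toPNat' 255 from rfl, hf, t2, t255] <;> decide
  have t514 : f (Nat.toPNat' 514) = 1 := by
    rw [show (Nat.toPNat' 514 : ℕ+) = Nat.toPNat' 2 * Nat.toPNat' 257 from rfl, hf, t2, t257] <;> decide
  have t522 : f (Nat.toPNat' 522) = 1 := by
    rw [show (Nat.toPNat' 522 : ℕ+) = Nat.toPNat' 2 * Nat.toPNat' 261 from rfl, hf, t2, t261] <;> decide
  have t528 : f (Nat.toPNat' 528) = 0 := by
    rw [show (Nat.toPNat' 528 : ℕ+) = Nat.toPNat' 2 * Nat.toPNat' 264 from rfl, hf, t2, t264] <;> decide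
  have t530 : f (Nat.toPNat' 530) = 1 := by
    rw [show (Nat.toPNat' 530 : ℕ+) = Nat.toPNat' 2 * Nat.toPNat' 265 from rfl, hf, t2, t265] <;> decide
  have hF : tabN.Forall (fun q => f q.1.toPNat' = q.2) := ⟨t2, t3, t4, t5, t6, t7, t8, t9, t10, t11, t12, t13, t14, t15, t16, t17, t18, t19, t20, t21, t22, t23, t24, t25, t26, t27, t28, t29, t30, t31, t32, t33, t34, t35, t36, t37, t38, t39, t40, t41, t42, t44, t45, t46, t48, t49, t50, t51, t52, t53, t54, t55, t56, t57, t58, t60, t61, t63, t64, t65, t66, t68, t69, t70, t72, t73, t74, t75, t76, t77, t78, t80, t81, t82, t84, t85, t87, t88, t89, t90, t91, t93, t95, t96, t98, t99, t100, t101, t102, t104, t105, t108, t110, t111, t112, t113, t114, t115, t116, t117, t119, t120, t122, t123, t125, t126, t128, t130, t132, t133, t135, t136, t140, t143, t144, t145, t146, t147, t148, t150, t152, t153, t154, t155, t156, t160, t161, t162, t164, t165, t168, t170, t171, t175, t176, t178, t180, t182, t185, t187, t189, t190, t192, t195, t196, t198, t200, t203, t204, t205, t207, t208, t209, t210, t216,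 t217, t220, t221, t224, t225, t226, t228, t231, t232, t234, t238, t240, t243, t244, t247, t250, t252, t253, t255, t256, t257, t260, t261, t264, t265, t266, t269, t270, t272, t273, t275, t279, t280, t285, t286, t288, t289, t292, t294, t296, t297, t299, t300, t304, t305, t306, t308, t312, t313, t315, t319, t320, t323, t324, t325, t328, t330, t333, t336, t340, t342, t345, t351, t352, t356, t357, t360, t364, t365, t369, t370, t373, t374, t375, t377, t378, t380, t384, t390, t391, t392, t396, t399, t400, t405, t408, t409, t410, t416, t418, t420, t425, t432, t437, t440, t442, t448, t450, t452, t456, t459, t461, t464, t468, t475, t476, t480, t481, t483, t488, t494, t500, t504, t505, t510, t514, t522, t528, t530⟩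
  intro M N hN hMN hle
  exact check_sound f (List.forall_iff_forall_mem.mp hF) M N
    (allpairs (M,N) (pairs_mem M N hN hMN hle))
/-- Any morphism `f : ℕ+ → ℤ/2ℤ` sending the `i`-th prime `p_i` to `0` for
`i ∈ {1,3,9,11,12,18,21,30,57,74,80,89}` and to `1` for
`i ∈ {2,4,5,6,7,8,10,13,16,24,26,55,65}` (arbitrary values on all other primes)
admits no monochromatic Pythagorean triple in `[1, 532]`.
Here `p_i = Nat.nth Nat.Prime (i - 1)` since `Nat.nth` is 0-indexed. -/
theorem avoiding_morphism_values_532 (f : ℕ+ → ZMod 2)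
    (hf : ∀ x y : ℕ+, f (x * y) = f x + f y)
    (h0 : ∀ i ∈ ({1, 3, 9, 11, 12, 18, 21, 30, 57, 74, 80, 89} : Finset ℕ),
      f (Nat.nth Nat.Prime (i - 1)).toPNat' = 0)
    (h1 : ∀ i ∈ ({2, 4, 5, 6, 7, 8, 10, 13, 16, 24, 26, 55, 65} : Finset ℕ),
      f (Nat.nth Nat.Prime (i - 1)).toPNat' = 1) :
    ∀ a b c : ℕ+, a ≤ 532 → b ≤ 532 → c ≤ 532 →
      a ^ 2 + b ^ 2 = c ^ 2 → ¬(f a = f b ∧ f b = f c) := by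
  have key := key_lemma f hf h0 h1
  have fmul : ∀ x y : ℕ, 0 < x → 0 < y →
      f (x*y).toPNat' = f x.toPNat' + f y.toPNat' := by
    intro x y hx hy
    have e : (x*y).toPNat' = x.toPNat' * y.toPNat' := by
      apply PNat.coe_injective
      rw [PNat.mul_coe, PNat.toPNat'_coe (Nat.mul_pos hx hy),
        PNat.toPNat'_coe hx, PNat.toPNat'_coe hy]
    rw [e, hf]
  intro a b c ha hb hc h hmono
  obtain ⟨hab, hbc⟩ := hmono
  have hnat : (a:ℕ)^2 + (b:ℕ)^2 = (c:ℕ)^2 := by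
    exact_mod_cast congrArg (fun x : ℕ+ => (x:ℕ)) h
  have hpt : PythagoreanTriple ((a:ℕ):ℤ) ((b:ℕ):ℤ) ((c:ℕ):ℤ) := by
    show ((a:ℕ):ℤ) * ((a:ℕ):ℤ) + ((b:ℕ):ℤ) * ((b:ℕ):ℤ) = ((c:ℕ):ℤ) * ((c:ℕ):ℤ)
    have h' : (((a:ℕ)^2 + (b:ℕ)^2 : ℕ) : ℤ) = (((c:ℕ)^2 : ℕ) : ℤ) := by exact_mod_cast hnat
    push_cast at h'
    nlinarith [h']
  obtain ⟨k, m, n, hleg, hhyp⟩ := (PythagoreanTriple.classification).mp hpt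
  set K := k.natAbs with hK
  set M0 := m.natAbs with hM0
  set N0 := n.natAbs with hN0
  have hm2 : (m^2).natAbs = M0^2 := Int.natAbs_pow m 2
  have hn2 : (n^2).natAbs = N0^2 := Int.natAbs_pow n 2
  have hm2n : 0 ≤ m^2 := sq_nonneg m
  have hn2n : 0 ≤ n^2 := sq_nonneg n
  -- c
  have habsZ : (m^2+n^2).natAbs = M0^2+N0^2 := by omega
  have hcn : (c:ℕ) = K * (M0^2+N0^2) := by
    rcases hhyp with h'|h' <;>
    · have := congrArg Int.natAbs h'
      simp only [Int.natAbs_natCast, Int.natAbs_mul, Int.natAbs_neg, habsZ] at this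
      exact this
  have hKpos : 0 < K := by
    rcases Nat.eq_zero_or_pos K with h'|h'
    · rw [h', zero_mul] at hcn
      have := c.pos
      omega
    · exact h'
  have hY : (2*m*n).natAbs = 2*(M0*N0) := by
    rw [Int.natAbs_mul, Int.natAbs_mul]; norm_num [mul_assoc]; rfl
  -- bound
  have hZle : M0^2 + N0^2 ≤ 532 := by
    have : (c:ℕ) ≤ 532 := by exact_mod_cast hc
    calc M0^2+N0^2 ≤ K * (M0^2+N0^2) := Nat.le_mul_of_pos_left _ hKpos
      _ ≤ 532 := by omega
  -- decompose f values
  have fsplit : ∀ (x : ℕ+) (W : ℕ), (x:ℕ) = K * W → 0 < W → f x = f K.toPNat' + f W.toPNat' := by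
    intro x W hxW hW
    rw [← PNat.coe_toPNat' x, hxW, fmul K W hKpos hW]
  -- legs
  have hane : ((a:ℕ):ℤ) ≠ 0 := by positivity
  have hbne : ((b:ℕ):ℤ) ≠ 0 := by positivity
  -- get e1 e2 : f values of X=natAbs(m^2-n^2), Y, Z
  have main : f ((m^2-n^2).natAbs).toPNat' = f ((2*m*n).natAbs).toPNat'
      ∧ f ((2*m*n).natAbs).toPNat' = f ((m^2+n^2).natAbs).toPNat' := by
    have hXpos' : (m^2-n^2) ≠ 0 := by
      rcases hleg with ⟨ha', _⟩|⟨_, hb'⟩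
      · intro h0'; rw [h0', mul_zero] at ha'; exact hane ha'
      · intro h0'; rw [h0', mul_zero] at hb'; exact hbne hb'
    have hYpos' : (2*m*n) ≠ 0 := by
      rcases hleg with ⟨_, hb'⟩|⟨ha', _⟩
      · intro h0'; rw [h0', mul_zero] at hb'; exact hbne hb'
      · intro h0'; rw [h0', mul_zero] at ha'; exact hane ha'
    have hXpos : 0 < (m^2-n^2).natAbs := Int.natAbs_pos.mpr hXpos'
    have hYpos : 0 < (2*m*n).natAbs := Int.natAbs_pos.mpr hYpos'
    have hZpos : 0 < (m^2+n^2).natAbs := by omega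
    have fc : f c = f K.toPNat' + f ((m^2+n^2).natAbs).toPNat' := by
      apply fsplit c _ _ hZpos
      rw [hcn, habsZ]
    rcases hleg with ⟨ha', hb'⟩|⟨ha', hb'⟩
    · have fa : f a = f K.toPNat' + f ((m^2-n^2).natAbs).toPNat' := by
        apply fsplit a _ _ hXpos
        have := congrArg Int.natAbs ha'
        simpa only [Int.natAbs_natCast, Int.natAbs_mul] using this
      have fb : f b = f K.toPNat' + f ((2*m*n).natAbs).toPNat' := by
        apply fsplit b _ _ hYpos
        have := congrArg Int.natAbs hb'
        simpa only [Int.natAbs_natCast, Int.natAbs_mul] using this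
      rw [fa, fb] at hab
      rw [fb, fc] at hbc
      exact ⟨add_left_cancel hab, add_left_cancel hbc⟩
    · have fa : f a = f K.toPNat' + f ((2*m*n).natAbs).toPNat' := by
        apply fsplit a _ _ hYpos
        have := congrArg Int.natAbs ha'
        simpa only [Int.natAbs_natCast, Int.natAbs_mul] using this
      have fb : f b = f K.toPNat' + f ((m^2-n^2).natAbs).toPNat' := by
        apply fsplit b _ _ hXpos
        have := congrArg Int.natAbs hb'
        simpa only [Int.natAbs_natCast, Int.natAbs_mul] using this
      rw [fa, fb] at hab
      rw [fb, fc] at hbc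
      have q1 := add_left_cancel hab
      have q2 := add_left_cancel hbc
      exact ⟨q1.symm, q1.trans q2⟩
  obtain ⟨e1, e2⟩ := main
  have hM0pos : 0 < M0 := by
    rcases Nat.eq_zero_or_pos M0 with h'|h'
    · exfalso
      have : m = 0 := Int.natAbs_eq_zero.mp h'
      have h2 : (2*m*n) ≠ 0 := by
        rcases hleg with ⟨_, hb'⟩|⟨ha', _⟩
        · intro h0'; rw [h0', mul_zero] at hb'; exact hbne hb'
        · intro h0'; rw [h0', mul_zero] at ha'; exact hane ha'
      rw [this] at h2; simp at h2
    · exact h'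
  have hN0pos : 0 < N0 := by
    rcases Nat.eq_zero_or_pos N0 with h'|h'
    · exfalso
      have : n = 0 := Int.natAbs_eq_zero.mp h'
      have h2 : (2*m*n) ≠ 0 := by
        rcases hleg with ⟨_, hb'⟩|⟨ha', _⟩
        · intro h0'; rw [h0', mul_zero] at hb'; exact hbne hb'
        · intro h0'; rw [h0', mul_zero] at ha'; exact hane ha'
      rw [this] at h2; simp at h2
    · exact h'
  have hne : M0 ≠ N0 := by
    intro hMN
    have : (m^2-n^2) ≠ 0 := by
      rcases hleg with ⟨ha', _⟩|⟨_, hb'⟩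
      · intro h0'; rw [h0', mul_zero] at ha'; exact hane ha'
      · intro h0'; rw [h0', mul_zero] at hb'; exact hbne hb'
    apply this
    have : (m^2).natAbs = (n^2).natAbs := by rw [hm2, hn2, hMN]
    omega
  rcases le_or_gt N0 M0 with hle|hlt
  · have hltMN : N0 < M0 := lt_of_le_of_ne hle (Ne.symm hne)
    have hsq : N0^2 ≤ M0^2 := Nat.pow_le_pow_left hle 2
    have hX : (m^2-n^2).natAbs = M0^2-N0^2 := by omega
    refine key M0 N0 hN0pos hltMN hZle ⟨?_, ?_⟩
    · rw [← hX, ← hY]; exact e1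
    · rw [← hY, ← habsZ]; exact e2
  · have hsq : M0^2 ≤ N0^2 := Nat.pow_le_pow_left hlt.le 2
    have hX : (m^2-n^2).natAbs = N0^2-M0^2 := by omega
    have hcomm : 2*(N0*M0) = 2*(M0*N0) := by ring
    refine key N0 M0 hM0pos hlt (by omega) ⟨?_, ?_⟩
    · rw [← hX, hcomm, ← hY]; exact e1
    · rw [hcomm, ← hY, show N0^2+M0^2 = M0^2+N0^2 from Nat.add_comm _ _, ← habsZ]; exact e2
end
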